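/- arXiv:1607.08674 — 5 statements merged into one kernel-verified Lean document; each statement's English description precedes it below -/
import Mathlib

section
/- For any sequence x in ℝ∪{-∞} indexed by ℕ, and any r ≥ 1, the (r+1)-th order extremal sequence satisfies the recursion x_n^{(r+1)} = ⋁_{j=r+1}^n ( x_{j-1}^{(r)} ∧ x_j ) for all n ≥ r+1, where x_n^{(r)} denotes the r-th largest among x_1,…,x_n (defined to be -∞ when n < r). -/
/-- The `r`-th largest among `x 1, …, x n` (with multiplicity), defined to be `⊥ = -∞`
when `n < r`. -/
noncomputable def kthLargest (x : ℕ → EReal) (r n : ℕ) : EReal :=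
  if r ≤ n then
    (((List.range n).map (fun i => x (i + 1))).mergeSort (fun a b => decide (b ≤ a))).getD
      (r - 1) ⊥
  else ⊥

namespace ExtremalAux

/-- in a descending sorted cons list, every entry is at most the head -/
lemma getD_le_head {b : EReal} {t : List EReal} (h : (b :: t).Pairwise (· ≥ ·)) (k : ℕ) :
    (b :: t).getD k ⊥ ≤ b := by
  rcases Nat.lt_or_ge k (b :: t).length with hk | hk
  · rw [List.getD_eq_getElem _ _ hk]
    have hmem : (b :: t)[k] ∈ b :: t := List.getElem_mem hk
    rcases List.mem_cons.mp hmem with heq | hmem'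
    · exact le_of_eq heq
    · exact List.rel_of_pairwise_cons h hmem'
  · rw [List.getD_eq_default _ _ hk]; exact bot_le

lemma getD_succ_le {s : List EReal} (h : s.Pairwise (· ≥ ·)) (k : ℕ) :
    s.getD (k + 1) ⊥ ≤ s.getD k ⊥ := by
  rcases Nat.lt_or_ge (k + 1) s.length with hk | hk
  · rw [List.getD_eq_getElem _ _ hk, List.getD_eq_getElem _ _ (Nat.lt_of_succ_lt hk)]
    exact h.rel_get_of_lt (a := ⟨k, Nat.lt_of_succ_lt hk⟩) (b := ⟨k + 1, hk⟩) (by simp)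
  · rw [List.getD_eq_default _ _ hk]; exact bot_le

/-- key step: order statistics of an ordered insertion -/
lemma getD_orderedInsert (a : EReal) :
    ∀ (s : List EReal) (k : ℕ), s.Pairwise (· ≥ ·) → k < s.length →
      (s.orderedInsert (· ≥ ·) a).getD (k + 1) ⊥ = s.getD (k + 1) ⊥ ⊔ (s.getD k ⊥ ⊓ a)
  | [], k, _, hk => absurd hk (by simp)
  | b :: t, k, hs, hk => by
    by_cases hab : b ≤ a
    · rw [List.orderedInsert, if_pos hab]
      have h1 : (b :: t).getD k ⊥ ⊓ a = (b :: t).getD k ⊥ :=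
        inf_eq_left.mpr ((getD_le_head hs k).trans hab)
      have h2 : (b :: t).getD (k + 1) ⊥ ⊔ (b :: t).getD k ⊥ = (b :: t).getD k ⊥ :=
        sup_eq_right.mpr (getD_succ_le hs k)
      rw [h1, h2, List.getD_cons_succ]
    · have hab' : a ≤ b := le_of_not_ge hab
      rw [List.orderedInsert, if_neg hab]
      cases k with
      | zero =>
        cases t with
        | nil => simp [List.orderedInsert, inf_eq_right.mpr hab']
        | cons c t' =>
          have hcb : c ≤ b := List.rel_of_pairwise_cons hs (a' := c) (by simp)
          rw [List.orderedInsert]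
          by_cases hac : c ≤ a
          · rw [if_pos hac]
            simp [inf_eq_right.mpr hab', sup_eq_right.mpr hac]
          · rw [if_neg hac]
            simp [inf_eq_right.mpr hab', sup_eq_left.mpr (le_of_not_ge hac)]
      | succ k =>
        have ht : t.Pairwise (· ≥ ·) := (List.pairwise_cons.mp hs).2
        have hk' : k < t.length := by simpa using Nat.lt_of_succ_lt_succ hk
        simpa using getD_orderedInsert a t k ht hk'

lemma sort_append (l : List EReal) (a : EReal) :
    (l ++ [a]).mergeSort (fun a b => decide (b ≤ a)) =
      (l.mergeSort (fun a b => decide (b ≤ a))).orderedInsert (· ≥ ·) a := by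
  have htrans : ∀ (a b c : EReal), decide (b ≤ a) → decide (c ≤ b) → decide (c ≤ a) := by
    intro a b c h1 h2
    simp only [decide_eq_true_eq] at *
    exact h2.trans h1
  have htotal : ∀ (a b : EReal), decide (b ≤ a) || decide (a ≤ b) := by
    intro a b
    simpa using le_total b a
  have hsorted : ∀ m : List EReal,
      (m.mergeSort (fun a b => decide (b ≤ a))).Pairwise (· ≥ ·) := by
    intro m
    have := List.pairwise_mergeSort htrans htotal m
    exact this.imp (by simp)
  refine List.Perm.eq_of_pairwise' (hsorted _) ((hsorted l).orderedInsert a _) ?_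
  refine ((List.mergeSort_perm _ _).trans ?_).trans (List.perm_orderedInsert _ a _).symm
  exact (List.perm_append_singleton a l).trans ((List.mergeSort_perm l _).symm.cons a)

lemma kth_eq_getD (x : ℕ → EReal) (r n : ℕ) (hr : 1 ≤ r) :
    kthLargest x r n =
      (((List.range n).map (fun i => x (i + 1))).mergeSort (fun a b => decide (b ≤ a))).getD
        (r - 1) ⊥ := by
  unfold kthLargest
  split
  · rfl
  · next h =>
    rw [List.getD_eq_default]
    · simp [List.length_mergeSort]; omega

lemma kth_step (x : ℕ → EReal) (r n : ℕ) (hr : 1 ≤ r) (hn : r ≤ n) :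
    kthLargest x (r + 1) (n + 1) =
      kthLargest x (r + 1) n ⊔ (kthLargest x r n ⊓ x (n + 1)) := by
  set l := (List.range n).map (fun i => x (i + 1)) with hl
  have hlist : (List.range (n + 1)).map (fun i => x (i + 1)) = l ++ [x (n + 1)] := by
    rw [List.range_succ, List.map_append]; rfl
  have hsorted : (l.mergeSort (fun a b => decide (b ≤ a))).Pairwise (· ≥ ·) := by
    have htrans : ∀ (a b c : EReal), decide (b ≤ a) → decide (c ≤ b) → decide (c ≤ a) := by
      intro a b c h1 h2
      simp only [decide_eq_true_eq] at *
      exact h2.trans h1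
    have htotal : ∀ (a b : EReal), decide (b ≤ a) || decide (a ≤ b) := by
      intro a b; simpa using le_total b a
    exact (List.pairwise_mergeSort htrans htotal l).imp (by simp)
  have hlen : r - 1 < (l.mergeSort (fun a b => decide (b ≤ a))).length := by
    simp [List.length_mergeSort, hl]; omega
  rw [kth_eq_getD x (r + 1) (n + 1) (by omega), kth_eq_getD x (r + 1) n (by omega),
    kth_eq_getD x r n hr, hlist, sort_append]
  have hkey := getD_orderedInsert (x (n + 1)) _ (r - 1) hsorted hlen
  have hr1 : r - 1 + 1 = r := by omega
  rw [hr1] at hkey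
  simpa using hkey

end ExtremalAux

/-- The recursion `x_n^{(r+1)} = ⋁_{j=r+1}^n (x_{j-1}^{(r)} ∧ x_j)` for `n ≥ r+1`. -/
theorem extremal_recursion (x : ℕ → EReal) (r : ℕ) (hr : 1 ≤ r) (n : ℕ) (hn : r + 1 ≤ n) :
    kthLargest x (r + 1) n =
      (Finset.Icc (r + 1) n).sup (fun j => kthLargest x r (j - 1) ⊓ x j) := by
  have key : ∀ m, r ≤ m → kthLargest x (r + 1) m =
      (Finset.Icc (r + 1) m).sup (fun j => kthLargest x r (j - 1) ⊓ x j) := by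
    intro m hm
    induction m, hm using Nat.le_induction with
    | base =>
      rw [Finset.Icc_eq_empty (by omega)]
      simp [kthLargest]
    | succ m hm ih =>
      rw [ExtremalAux.kth_step x r m hr hm, ih,
        ← Finset.insert_Icc_right_eq_Icc_add_one (by omega : r + 1 ≤ m + 1), Finset.sup_insert]
      simp [sup_comm]
  exact key n (by omega)
end

section
/- If X_1, X_2, … are i.i.d. random variables with a continuous distribution function, then the relative ranks R_n := #{ j ≤ n : X_j ≥ X_n } are independent random variables, and R_n is uniformly distributed on {1, 2, …, n}, i.e. P[R_n = i] = 1/n for i = 1,…,n. -/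
open MeasureTheory ProbabilityTheory
open scoped ENNReal

open Classical in
/-- The relative rank `R_n = #{j ∈ {1,…,n} : X_j ≥ X_n}` of `X_n` among `X_1,…,X_n`. -/
noncomputable def relRank {Ω : Type*} (X : ℕ → Ω → ℝ) (n : ℕ) (ω : Ω) : ℕ :=
  ((Finset.Icc 1 n).filter (fun j => X n ω ≤ X j ω)).card

namespace RelRankAux

open Finset

variable {N : ℕ}

/-- The rank sequence associated to a permutation. -/
def rankPerm (ρ : Equiv.Perm (Fin N)) (n : Fin N) : ℕ :=
  (Finset.univ.filter fun i : Fin N => i ≤ n ∧ ρ n ≤ ρ i).card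

lemma comparisons_eq {ρ τ : Equiv.Perm (Fin N)} (h : rankPerm ρ = rankPerm τ) :
    ∀ (n j : Fin N), j < n → (ρ j < ρ n ↔ τ j < τ n) := by
  have main : ∀ m : ℕ, ∀ n j : Fin N, n.1 = m → j < n → (ρ j < ρ n ↔ τ j < τ n) := by
    intro m
    induction m using Nat.strong_induction_on with
    | _ m IH =>
      intro n j hm hj
      set A := (Finset.Iic n).filter (fun k => ¬ (ρ n ≤ ρ k)) with hAdef
      set B := (Finset.Iic n).filter (fun k => ¬ (τ n ≤ τ k)) with hBdef
      have hAmem : ∀ k, k ∈ A ↔ (k < n ∧ ρ k < ρ n) := by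
        intro k
        simp only [hAdef, Finset.mem_filter, Finset.mem_Iic, not_le]
        constructor
        · rintro ⟨hk, hlt⟩
          exact ⟨lt_of_le_of_ne hk (fun e => absurd (e ▸ hlt) (lt_irrefl _)), hlt⟩
        · exact fun ⟨hk, hlt⟩ => ⟨hk.le, hlt⟩
      have hBmem : ∀ k, k ∈ B ↔ (k < n ∧ τ k < τ n) := by
        intro k
        simp only [hBdef, Finset.mem_filter, Finset.mem_Iic, not_le]
        constructor
        · rintro ⟨hk, hlt⟩
          exact ⟨lt_of_le_of_ne hk (fun e => absurd (e ▸ hlt) (lt_irrefl _)), hlt⟩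
        · exact fun ⟨hk, hlt⟩ => ⟨hk.le, hlt⟩
      have hfilA : (Finset.univ.filter fun i : Fin N => i ≤ n ∧ ρ n ≤ ρ i)
          = (Finset.Iic n).filter (fun k => ρ n ≤ ρ k) := by
        ext k; simp [Finset.mem_Iic]
      have hfilB : (Finset.univ.filter fun i : Fin N => i ≤ n ∧ τ n ≤ τ i)
          = (Finset.Iic n).filter (fun k => τ n ≤ τ k) := by
        ext k; simp [Finset.mem_Iic]
      have hcardA : rankPerm ρ n + A.card = n.1 + 1 := by
        rw [rankPerm, hfilA, hAdef, Finset.card_filter_add_card_filter_not, Fin.card_Iic]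
      have hcardB : rankPerm τ n + B.card = n.1 + 1 := by
        rw [rankPerm, hfilB, hBdef, Finset.card_filter_add_card_filter_not, Fin.card_Iic]
      have hrank : rankPerm ρ n = rankPerm τ n := congrFun h n
      have hcard : A.card = B.card := by omega
      have hsub : A ⊆ B ∨ B ⊆ A := by
        by_contra hc
        push_neg at hc
        obtain ⟨j₀, hj₀A, hj₀B⟩ := Finset.not_subset.1 hc.1
        obtain ⟨k₀, hk₀B, hk₀A⟩ := Finset.not_subset.1 hc.2
        rw [hAmem] at hj₀A hk₀A
        rw [hBmem] at hj₀B hk₀B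
        obtain ⟨hj₀n, hρj₀⟩ := hj₀A
        obtain ⟨hk₀n, hτk₀⟩ := hk₀B
        have hτj₀ : τ n < τ j₀ := by
          have h1 : ¬ τ j₀ < τ n := fun hx => hj₀B ⟨hj₀n, hx⟩
          have h2 : τ j₀ ≠ τ n := fun e => (ne_of_lt hj₀n) (τ.injective e)
          exact lt_of_le_of_ne (not_lt.1 h1) (Ne.symm h2)
        have hρk₀ : ρ n < ρ k₀ := by
          have h1 : ¬ ρ k₀ < ρ n := fun hx => hk₀A ⟨hk₀n, hx⟩
          have h2 : ρ k₀ ≠ ρ n := fun e => (ne_of_lt hk₀n) (ρ.injective e)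
          exact lt_of_le_of_ne (not_lt.1 h1) (Ne.symm h2)
        rcases lt_trichotomy j₀ k₀ with hlt | heq | hgt
        · have hiff := IH k₀.1 (by omega) k₀ j₀ rfl hlt
          exact absurd (hiff.1 (hρj₀.trans hρk₀)) (lt_asymm (hτk₀.trans hτj₀))
        · subst heq
          exact absurd (hρj₀.trans hρk₀) (lt_irrefl _)
        · have hiff := IH j₀.1 (by omega) j₀ k₀ rfl hgt
          exact absurd (hiff.2 (hτk₀.trans hτj₀)) (lt_asymm (hρj₀.trans hρk₀))
      have hAB : A = B := by
        rcases hsub with hs | hs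
        · exact Finset.eq_of_subset_of_card_le hs (le_of_eq hcard.symm)
        · exact (Finset.eq_of_subset_of_card_le hs (le_of_eq hcard)).symm
      constructor
      · intro hh
        exact ((hBmem j).1 (hAB ▸ (hAmem j).2 ⟨hj, hh⟩)).2
      · intro hh
        exact ((hAmem j).1 (hAB ▸ (hBmem j).2 ⟨hj, hh⟩)).2
  exact fun n j hj => main n.1 n j rfl hj

lemma rankPerm_injective : Function.Injective (rankPerm (N := N)) := by
  intro ρ τ h
  have key := comparisons_eq h
  have key2 : ∀ j k : Fin N, ρ j < ρ k ↔ τ j < τ k := by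
    intro j k
    rcases lt_trichotomy j k with hlt | rfl | hgt
    · exact key k j hlt
    · simp
    · have h1 := key j k hgt
      have hρ : ρ j ≠ ρ k := fun e => (ne_of_gt hgt) (ρ.injective e)
      have hτ : τ j ≠ τ k := fun e => (ne_of_gt hgt) (τ.injective e)
      constructor
      · intro hh
        have h3 : ¬ τ k < τ j := fun hx => (lt_asymm hh) (h1.2 hx)
        exact lt_of_le_of_ne (not_lt.1 h3) hτ
      · intro hh
        have h3 : ¬ ρ k < ρ j := fun hx => (lt_asymm hh) (h1.1 hx)
        exact lt_of_le_of_ne (not_lt.1 h3) hρ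
  have hsm : StrictMono (fun i => τ (ρ.symm i)) := by
    intro a b hab
    exact (key2 (ρ.symm a) (ρ.symm b)).1 (by simpa using hab)
  haveI : WellFoundedLT (Fin N) := inferInstance
  have hid : (fun i => τ (ρ.symm i)) = id := by
    refine (StrictMono.range_inj hsm (strictMono_id : StrictMono (id : Fin N → Fin N))).1 ?_
    rw [Set.range_id, Set.range_eq_univ]
    exact τ.surjective.comp ρ.symm.surjective
  exact Equiv.ext fun x => by simpa using (congrFun hid (ρ x)).symm

lemma rankPerm_mem_piFinset (ρ : Equiv.Perm (Fin N)) :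
    rankPerm ρ ∈ Fintype.piFinset (fun n : Fin N => Finset.Icc 1 (n.1 + 1)) := by
  have h1 : ∀ n : Fin N, 1 ≤ rankPerm ρ n := fun n => Finset.card_pos.2 ⟨n, by simp⟩
  have h2 : ∀ n : Fin N, rankPerm ρ n ≤ n.1 + 1 := by
    intro n
    have h : (Finset.univ.filter fun i : Fin N => i ≤ n ∧ ρ n ≤ ρ i) ⊆ Finset.Iic n := by
      intro i hi
      simp only [Finset.mem_filter] at hi
      simpa [Finset.mem_Iic] using hi.2.1
    simpa [rankPerm, Fin.card_Iic] using Finset.card_le_card h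
  simp only [Fintype.mem_piFinset, Finset.mem_Icc]
  exact fun n => ⟨h1 n, h2 n⟩

lemma image_rankPerm :
    (Finset.univ.image (rankPerm (N := N)))
      = Fintype.piFinset (fun n : Fin N => Finset.Icc 1 (n.1 + 1)) := by
  apply Finset.eq_of_subset_of_card_le
  · intro g hg
    obtain ⟨ρ, -, rfl⟩ := Finset.mem_image.1 hg
    exact rankPerm_mem_piFinset ρ
  · have hicc : ∀ n : Fin N, (Finset.Icc 1 (n.1 + 1)).card = n.1 + 1 := by
      intro n; rw [Nat.card_Icc]; omega
    have hpf : (Fintype.piFinset (fun n : Fin N => Finset.Icc 1 (n.1 + 1))).card = N.factorial := by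
      rw [Fintype.card_piFinset]
      calc ∏ n : Fin N, (Finset.Icc 1 (n.1 + 1)).card = ∏ n : Fin N, (n.1 + 1) :=
            Finset.prod_congr rfl fun n _ => hicc n
        _ = ∏ i ∈ Finset.range N, (i + 1) := Fin.prod_univ_eq_prod_range _ _
        _ = N.factorial := Finset.prod_range_add_one_eq_factorial N
    have himg : (Finset.univ.image (rankPerm (N := N))).card = N.factorial := by
      rw [Finset.card_image_of_injective _ rankPerm_injective,
        Finset.card_univ, Fintype.card_perm, Fintype.card_fin]
    rw [hpf, himg]

lemma card_compatible (s : Finset (Fin N)) (f : Fin N → ℕ)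
    (hf : ∀ n ∈ s, 1 ≤ f n ∧ f n ≤ n.1 + 1) :
    ((Finset.univ.filter fun ρ : Equiv.Perm (Fin N) => ∀ n ∈ s, rankPerm ρ n = f n)).card
      = ∏ n ∈ sᶜ, (n.1 + 1) := by
  classical
  set p : (Fin N → ℕ) → Prop := fun g => ∀ n ∈ s, g n = f n with hp
  have h1 : (Finset.univ.filter fun ρ : Equiv.Perm (Fin N) => ∀ n ∈ s, rankPerm ρ n = f n)
      = Finset.univ.filter (fun ρ => p (rankPerm ρ)) := rfl
  have h2 : ((Finset.univ.filter (fun ρ : Equiv.Perm (Fin N) => p (rankPerm ρ))).image rankPerm).card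
      = ((Finset.univ.image (rankPerm (N := N))).filter p).card := by
    rw [Finset.filter_image]
  have h3 : ((Finset.univ.filter (fun ρ : Equiv.Perm (Fin N) => p (rankPerm ρ))).image rankPerm).card
      = (Finset.univ.filter (fun ρ : Equiv.Perm (Fin N) => p (rankPerm ρ))).card :=
    Finset.card_image_of_injective _ rankPerm_injective
  rw [h1, ← h3, h2, image_rankPerm]
  have h4 : (Fintype.piFinset (fun n : Fin N => Finset.Icc 1 (n.1 + 1))).filter p
      = Fintype.piFinset (fun n : Fin N =>
          if n ∈ s then ({f n} : Finset ℕ) else Finset.Icc 1 (n.1 + 1)) := by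
    ext g
    simp only [Finset.mem_filter, Fintype.mem_piFinset, hp]
    constructor
    · rintro ⟨hg, hgf⟩ n
      by_cases hn : n ∈ s
      · simp [hn, hgf n hn]
      · simp [hn, hg n]
    · intro hg
      constructor
      · intro n
        by_cases hn : n ∈ s
        · have := hg n; rw [if_pos hn, Finset.mem_singleton] at this
          rw [this, Finset.mem_Icc]
          exact ⟨(hf n hn).1, (hf n hn).2⟩
        · have := hg n; rwa [if_neg hn] at this
      · intro n hn
        have := hg n; rwa [if_pos hn, Finset.mem_singleton] at this
  rw [h4, Fintype.card_piFinset]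
  have h5 : ∀ n : Fin N,
      ((if n ∈ s then ({f n} : Finset ℕ) else Finset.Icc 1 (n.1 + 1))).card
        = if n ∈ s then 1 else (n.1 + 1) := by
    intro n
    by_cases hn : n ∈ s <;> simp [hn, Nat.card_Icc]
  calc ∏ n : Fin N, ((if n ∈ s then ({f n} : Finset ℕ) else Finset.Icc 1 (n.1 + 1))).card
      = ∏ n : Fin N, (if n ∈ s then 1 else (n.1 + 1)) := Finset.prod_congr rfl fun n _ => h5 n
    _ = ∏ n ∈ sᶜ, (n.1 + 1) := by
        rw [Finset.prod_ite, Finset.prod_const_one, one_mul]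
        congr 1
        ext n
        simp

section MeasureSide

variable {Ω : Type*} [MeasurableSpace Ω] {P : Measure Ω} [IsProbabilityMeasure P]
  {X : ℕ → Ω → ℝ} {μ : Measure ℝ}

/-- The vector of the first `N` variables (indices `1,…,N`). -/
def vecX (X : ℕ → Ω → ℝ) (N : ℕ) (ω : Ω) (i : Fin N) : ℝ := X (i.1 + 1) ω

lemma measurable_vecX (hmeas : ∀ i, Measurable (X i)) (N : ℕ) :
    Measurable (vecX X N) :=
  measurable_pi_lambda _ fun i => hmeas _

lemma isProbMeasure_mu (hmeas : ∀ i, Measurable (X i))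
    (hid : ∀ i, Measure.map (X i) P = μ) : IsProbabilityMeasure μ := by
  rw [← hid 0]
  exact Measure.isProbabilityMeasure_map (hmeas 0).aemeasurable

lemma map_vecX (hmeas : ∀ i, Measurable (X i))
    (hindep : iIndepFun X P)
    (hid : ∀ i, Measure.map (X i) P = μ) (N : ℕ) :
    Measure.map (vecX X N) P = Measure.pi (fun _ : Fin N => μ) := by
  have hμ : IsProbabilityMeasure μ := isProbMeasure_mu hmeas hid
  refine (Measure.pi_eq fun s hs => ?_).symm
  rw [Measure.map_apply (measurable_vecX hmeas N) (MeasurableSet.univ_pi hs)]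
  classical
  set sE : ℕ → Set ℝ := fun j =>
    if h : 1 ≤ j ∧ j ≤ N then s ⟨j - 1, by omega⟩ else Set.univ with hsE
  have hsE_apply : ∀ i : Fin N, sE (i.1 + 1) = s i := by
    intro i
    have h : 1 ≤ i.1 + 1 ∧ i.1 + 1 ≤ N := ⟨by omega, by omega⟩
    rw [hsE]
    simp only [dif_pos h]
    congr 1
  have hinj : Function.Injective (fun i : Fin N => i.1 + 1) := by
    intro a b hab
    simp only at hab
    exact Fin.ext (by omega)
  have hpre : vecX X N ⁻¹' (Set.pi Set.univ s)
      = ⋂ j ∈ Finset.image (fun i : Fin N => i.1 + 1) Finset.univ, X j ⁻¹' sE j := by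
    ext ω
    simp only [Set.mem_preimage, Set.mem_pi, Set.mem_univ, forall_true_left, Set.mem_iInter,
      Finset.mem_image, Finset.mem_univ, true_and]
    constructor
    · rintro hω j ⟨i, rfl⟩
      rw [hsE_apply i]
      exact hω i
    · intro hω i
      rw [← hsE_apply i]
      exact hω _ ⟨i, rfl⟩
  have hmeasE : ∀ j ∈ Finset.image (fun i : Fin N => i.1 + 1) Finset.univ,
      MeasurableSet (sE j) := by
    intro j _
    rw [hsE]
    dsimp only
    split_ifs with h
    · exact hs _
    · exact MeasurableSet.univ
  rw [hpre, hindep.measure_inter_preimage_eq_mul _ hmeasE,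
    Finset.prod_image (fun a _ b _ hab => hinj hab)]
  refine Finset.prod_congr rfl fun i _ => ?_
  rw [hsE_apply i, ← hid (i.1 + 1), Measure.map_apply (hmeas _) (hs i)]

lemma pair_eq_null (hmeas : ∀ i, Measurable (X i))
    (hindep : iIndepFun X P)
    (hid : ∀ i, Measure.map (X i) P = μ) (hcont : ∀ y : ℝ, μ {y} = 0)
    {a b : ℕ} (hab : a ≠ b) : P {ω | X a ω = X b ω} = 0 := by
  haveI : IsProbabilityMeasure μ := isProbMeasure_mu hmeas hid
  have h := (hindep.indepFun hab)
  rw [indepFun_iff_map_prod_eq_prod_map_map (hmeas a).aemeasurable (hmeas b).aemeasurable] at h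
  have hd : MeasurableSet {p : ℝ × ℝ | p.1 = p.2} :=
    measurableSet_eq_fun measurable_fst measurable_snd
  have heq : {ω | X a ω = X b ω} = (fun ω => (X a ω, X b ω)) ⁻¹' {p : ℝ × ℝ | p.1 = p.2} := rfl
  rw [heq, ← Measure.map_apply ((hmeas a).prodMk (hmeas b)) hd, h, hid, hid,
    Measure.prod_apply hd]
  have hz : ∀ x : ℝ, μ (Prod.mk x ⁻¹' {p : ℝ × ℝ | p.1 = p.2}) = 0 := by
    intro x
    have : Prod.mk x ⁻¹' {p : ℝ × ℝ | p.1 = p.2} = {x} := by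
      ext y; simp [eq_comm]
    rw [this]
    exact hcont x
  simp only [hz]
  exact lintegral_zero

lemma tie_null (hmeas : ∀ i, Measurable (X i))
    (hindep : iIndepFun X P)
    (hid : ∀ i, Measure.map (X i) P = μ) (hcont : ∀ y : ℝ, μ {y} = 0) (N : ℕ) :
    P {ω | ¬ Function.Injective (vecX X N ω)} = 0 := by
  have hsub : {ω | ¬ Function.Injective (vecX X N ω)}
      ⊆ ⋃ (a : Fin N) (b : Fin N) (_ : a ≠ b), {ω | X (a.1 + 1) ω = X (b.1 + 1) ω} := by
    intro ω hω
    rw [Set.mem_setOf_eq, Function.not_injective_iff] at hω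
    obtain ⟨a, b, hab, hne⟩ := hω
    exact Set.mem_iUnion.2 ⟨a, Set.mem_iUnion.2 ⟨b, Set.mem_iUnion.2 ⟨hne, hab⟩⟩⟩
  refine measure_mono_null hsub ?_
  refine measure_iUnion_null fun a => measure_iUnion_null fun b => measure_iUnion_null fun hne => ?_
  exact pair_eq_null hmeas hindep hid hcont (by
    intro h
    exact hne (Fin.ext (by omega)))

/-- The event that the coordinates, rearranged by `σ`, are strictly increasing. -/
def ordSet (N : ℕ) (σ : Equiv.Perm (Fin N)) : Set (Fin N → ℝ) := {x | StrictMono (x ∘ σ)}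

lemma measurableSet_ordSet (N : ℕ) (σ : Equiv.Perm (Fin N)) : MeasurableSet (ordSet N σ) := by
  have : ordSet N σ
      = ⋂ (a : Fin N) (b : Fin N) (_ : a < b), {x : Fin N → ℝ | x (σ a) < x (σ b)} := by
    ext x
    simp only [ordSet, Set.mem_setOf_eq, Set.mem_iInter]
    exact ⟨fun h a b hab => h hab, fun h a b hab => h a b hab⟩
  rw [this]
  exact MeasurableSet.iInter fun a => MeasurableSet.iInter fun b => MeasurableSet.iInter fun _ =>
    measurableSet_lt (measurable_pi_apply _) (measurable_pi_apply _)

lemma pi_ordSet_eq (hμ : IsProbabilityMeasure μ) (N : ℕ) (σ : Equiv.Perm (Fin N)) :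
    Measure.pi (fun _ : Fin N => μ) (ordSet N σ) = Measure.pi (fun _ : Fin N => μ) (ordSet N 1) := by
  have hcoe : (fun x : Fin N → ℝ => x ∘ σ)
      = ⇑(MeasurableEquiv.piCongrLeft (fun _ : Fin N => ℝ) (σ.symm : Fin N ≃ Fin N)) := by
    funext x
    funext j
    conv_rhs => rw [show j = σ.symm (σ j) by simp]
    rw [MeasurableEquiv.piCongrLeft_apply_apply]
    rfl
  have hmp : MeasurePreserving (fun x : Fin N → ℝ => x ∘ σ)
      (Measure.pi fun _ : Fin N => μ) (Measure.pi fun _ : Fin N => μ) := by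
    rw [hcoe]
    exact measurePreserving_piCongrLeft (fun _ : Fin N => μ) (σ.symm : Fin N ≃ Fin N)
  have hpre : (fun x : Fin N → ℝ => x ∘ σ) ⁻¹' (ordSet N 1) = ordSet N σ := by
    ext x
    simp only [Set.mem_preimage, ordSet, Set.mem_setOf_eq]
    constructor
    · intro h
      simpa using h
    · intro h
      simpa using h
  rw [← hpre, hmp.measure_preimage (measurableSet_ordSet N 1).nullMeasurableSet]

lemma ordEvent_prob (hmeas : ∀ i, Measurable (X i))
    (hindep : iIndepFun X P)
    (hid : ∀ i, Measure.map (X i) P = μ) (hcont : ∀ y : ℝ, μ {y} = 0) (N : ℕ)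
    (σ : Equiv.Perm (Fin N)) :
    P (vecX X N ⁻¹' ordSet N σ) = ((N.factorial : ℝ≥0∞))⁻¹ := by
  have hμ : IsProbabilityMeasure μ := isProbMeasure_mu hmeas hid
  have hPσ : ∀ τ : Equiv.Perm (Fin N), P (vecX X N ⁻¹' ordSet N τ)
      = Measure.pi (fun _ : Fin N => μ) (ordSet N 1) := by
    intro τ
    rw [← Measure.map_apply (measurable_vecX hmeas N) (measurableSet_ordSet N τ),
      map_vecX hmeas hindep hid N, pi_ordSet_eq hμ N τ]
  have hdisj : Pairwise (Function.onFun Disjoint fun σ : Equiv.Perm (Fin N) =>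
      vecX X N ⁻¹' ordSet N σ) := by
    intro σ τ hne
    refine Set.disjoint_left.2 fun ω hσ hτ => hne ?_
    simp only [Set.mem_preimage, ordSet, Set.mem_setOf_eq] at hσ hτ
    set x := vecX X N ω with hx
    have hxinj : Function.Injective x := by
      have hcomp : x = (x ∘ σ) ∘ σ.symm := by
        funext i; simp
      rw [hcomp]
      exact hσ.injective.comp σ.symm.injective
    haveI : WellFoundedLT (Fin N) := inferInstance
    have hcomp_eq : x ∘ σ = x ∘ τ := by
      refine (StrictMono.range_inj hσ hτ).1 ?_
      rw [Set.range_comp, Set.range_comp, Equiv.range_eq_univ, Equiv.range_eq_univ]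
    exact Equiv.ext fun i => hxinj (congrFun hcomp_eq i)
  have hmeasA : ∀ σ : Equiv.Perm (Fin N), MeasurableSet (vecX X N ⁻¹' ordSet N σ) := fun σ =>
    (measurable_vecX hmeas N) (measurableSet_ordSet N σ)
  have hcover : {ω | Function.Injective (vecX X N ω)}
      ⊆ ⋃ σ : Equiv.Perm (Fin N), vecX X N ⁻¹' ordSet N σ := by
    intro ω hω
    refine Set.mem_iUnion.2 ⟨Tuple.sort (vecX X N ω), ?_⟩
    exact (Tuple.monotone_sort _).strictMono_of_injective
      (Function.Injective.comp hω (Tuple.sort _).injective)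
  have hU : P (⋃ σ : Equiv.Perm (Fin N), vecX X N ⁻¹' ordSet N σ) = 1 := by
    refine le_antisymm prob_le_one ?_
    have h1 : (1 : ℝ≥0∞) = P Set.univ := (measure_univ).symm
    rw [h1]
    have hsplit : (Set.univ : Set Ω)
        ⊆ (⋃ σ : Equiv.Perm (Fin N), vecX X N ⁻¹' ordSet N σ)
          ∪ {ω | ¬ Function.Injective (vecX X N ω)} := by
      intro ω _
      by_cases hω : Function.Injective (vecX X N ω)
      · exact Or.inl (hcover hω)
      · exact Or.inr hω
    calc P Set.univ ≤ P ((⋃ σ : Equiv.Perm (Fin N), vecX X N ⁻¹' ordSet N σ)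
          ∪ {ω | ¬ Function.Injective (vecX X N ω)}) := measure_mono hsplit
      _ ≤ P (⋃ σ : Equiv.Perm (Fin N), vecX X N ⁻¹' ordSet N σ)
          + P {ω | ¬ Function.Injective (vecX X N ω)} := measure_union_le _ _
      _ = P (⋃ σ : Equiv.Perm (Fin N), vecX X N ⁻¹' ordSet N σ) := by
          rw [tie_null hmeas hindep hid hcont N, add_zero]
  have hsum : ∑ τ : Equiv.Perm (Fin N), P (vecX X N ⁻¹' ordSet N τ) = 1 := by
    rw [← hU, measure_iUnion hdisj hmeasA, tsum_fintype]
  set c := Measure.pi (fun _ : Fin N => μ) (ordSet N 1) with hc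
  have hNc : (N.factorial : ℝ≥0∞) * c = 1 := by
    rw [← hsum]
    have : ∀ τ : Equiv.Perm (Fin N), P (vecX X N ⁻¹' ordSet N τ) = c := hPσ
    rw [Finset.sum_congr rfl fun τ _ => this τ, Finset.sum_const, Finset.card_univ,
      Fintype.card_perm, Fintype.card_fin, nsmul_eq_mul]
  have h0 : (N.factorial : ℝ≥0∞) ≠ 0 := Nat.cast_ne_zero.2 (Nat.factorial_ne_zero N)
  have ht : (N.factorial : ℝ≥0∞) ≠ ⊤ := ENNReal.natCast_ne_top _
  rw [hPσ σ]
  calc c = ((N.factorial : ℝ≥0∞))⁻¹ * ((N.factorial : ℝ≥0∞) * c) := by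
        rw [← mul_assoc, ENNReal.inv_mul_cancel h0 ht, one_mul]
    _ = ((N.factorial : ℝ≥0∞))⁻¹ := by rw [hNc, mul_one]

lemma ordSet_disjoint (N : ℕ) :
    Pairwise (Function.onFun Disjoint fun σ : Equiv.Perm (Fin N) => ordSet N σ) := by
  intro σ τ hne
  refine Set.disjoint_left.2 fun x hσ hτ => hne ?_
  simp only [ordSet, Set.mem_setOf_eq] at hσ hτ
  have hxinj : Function.Injective x := by
    have hcomp : x = (x ∘ σ) ∘ σ.symm := by funext i; simp
    rw [hcomp]; exact hσ.injective.comp σ.symm.injective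
  haveI : WellFoundedLT (Fin N) := inferInstance
  have hcomp_eq : x ∘ σ = x ∘ τ := by
    refine (StrictMono.range_inj hσ hτ).1 ?_
    rw [Set.range_comp, Set.range_comp, Equiv.range_eq_univ, Equiv.range_eq_univ]
  exact Equiv.ext fun i => hxinj (congrFun hcomp_eq i)

lemma injective_mem_ordSet {N : ℕ} {x : Fin N → ℝ} (hx : Function.Injective x) :
    ∃ σ : Equiv.Perm (Fin N), x ∈ ordSet N σ :=
  ⟨Tuple.sort x, (Tuple.monotone_sort x).strictMono_of_injective
    (hx.comp (Tuple.sort x).injective)⟩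

lemma relRank_zero (X : ℕ → Ω → ℝ) (ω : Ω) : relRank X 0 ω = 0 := by
  simp [relRank]

lemma one_le_relRank {n : ℕ} (hn : 1 ≤ n) (ω : Ω) : 1 ≤ relRank X n ω := by
  refine Finset.card_pos.2 ⟨n, ?_⟩
  simp [relRank, Finset.mem_Icc, hn]

lemma relRank_le (n : ℕ) (ω : Ω) : relRank X n ω ≤ n := by
  calc relRank X n ω ≤ (Finset.Icc 1 n).card := Finset.card_filter_le _ _
    _ = n := by rw [Nat.card_Icc]; omega

lemma measurable_relRank (hmeas : ∀ i, Measurable (X i)) (n : ℕ) :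
    Measurable (relRank X n) := by
  classical
  have heq : relRank X n = fun ω => ∑ j ∈ Finset.Icc 1 n, if X n ω ≤ X j ω then 1 else 0 := by
    funext ω
    rw [relRank, Finset.card_filter]
  rw [heq]
  exact Finset.measurable_sum _ fun j _ =>
    Measurable.ite (measurableSet_le (hmeas n) (hmeas j)) measurable_const measurable_const

lemma relRank_eq_rankPerm {ω : Ω} {N : ℕ} {σ : Equiv.Perm (Fin N)}
    (h : StrictMono (vecX X N ω ∘ σ)) (n : Fin N) :
    relRank X (n.1 + 1) ω = rankPerm σ.symm n := by
  classical
  have key : ∀ i j : Fin N, (X (j.1 + 1) ω ≤ X (i.1 + 1) ω ↔ σ.symm j ≤ σ.symm i) := by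
    intro i j
    have hi : X (i.1 + 1) ω = (vecX X N ω ∘ σ) (σ.symm i) := by simp [vecX]
    have hj : X (j.1 + 1) ω = (vecX X N ω ∘ σ) (σ.symm j) := by simp [vecX]
    rw [hi, hj, h.le_iff_le]
  have hinj' : ∀ a ∈ (Finset.univ.filter fun i : Fin N => i ≤ n ∧ σ.symm n ≤ σ.symm i),
      ∀ b ∈ (Finset.univ.filter fun i : Fin N => i ≤ n ∧ σ.symm n ≤ σ.symm i),
      a.1 + 1 = b.1 + 1 → a = b := fun a _ b _ hab => Fin.ext (by omega)
  have himage : (Finset.Icc 1 (n.1 + 1)).filter (fun j => X (n.1 + 1) ω ≤ X j ω)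
      = (Finset.univ.filter fun i : Fin N => i ≤ n ∧ σ.symm n ≤ σ.symm i).image
          (fun i : Fin N => i.1 + 1) := by
    ext j
    simp only [Finset.mem_filter, Finset.mem_Icc, Finset.mem_image, Finset.mem_univ, true_and]
    constructor
    · rintro ⟨⟨h1, h2⟩, hle⟩
      have hnN : n.1 < N := n.2
      have hjN : j - 1 < N := by omega
      refine ⟨⟨j - 1, hjN⟩, ⟨?_, ?_⟩, by show j - 1 + 1 = j; omega⟩
      · rw [Fin.le_def]
        show j - 1 ≤ n.1
        omega
      · refine (key ⟨j - 1, hjN⟩ n).1 ?_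
        show X (n.1 + 1) ω ≤ X (j - 1 + 1) ω
        rw [show j - 1 + 1 = j by omega]
        exact hle
    · rintro ⟨i, ⟨hin, hle⟩, rfl⟩
      have hin' : i.1 ≤ n.1 := hin
      exact ⟨⟨by omega, by omega⟩, (key i n).2 hle⟩
  have hcard : ((Finset.Icc 1 (n.1 + 1)).filter (fun j => X (n.1 + 1) ω ≤ X j ω)).card
      = rankPerm σ.symm n := by
    rw [himage, Finset.card_image_of_injOn fun a ha b hb hab => hinj' a ha b hb hab]
    rfl
  rw [relRank, Finset.filter_congr_decidable]
  exact hcard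

lemma master (hmeas : ∀ i, Measurable (X i))
    (hindep : iIndepFun X P)
    (hid : ∀ i, Measure.map (X i) P = μ) (hcont : ∀ y : ℝ, μ {y} = 0)
    (s : Finset ℕ) (hs1 : ∀ n ∈ s, 1 ≤ n)
    (f : ℕ → ℕ) (hf : ∀ n ∈ s, 1 ≤ f n ∧ f n ≤ n) :
    P (⋂ n ∈ s, {ω | relRank X n ω = f n}) = ∏ n ∈ s, ((n : ℝ≥0∞))⁻¹ := by
  classical
  rcases Finset.eq_empty_or_nonempty s with rfl | hne
  · simp
  obtain ⟨n₀, hn₀⟩ := hne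
  set N := s.sup id with hNdef
  have hNle : ∀ n ∈ s, n ≤ N := fun n hn => Finset.le_sup (f := id) hn
  have hN1 : 1 ≤ N := le_trans (hs1 n₀ hn₀) (hNle n₀ hn₀)
  have hbound : ∀ m ∈ s.image (· - 1), m < N := by
    intro m hm
    obtain ⟨n, hn, rfl⟩ := Finset.mem_image.1 hm
    have h1 := hs1 n hn
    have h2 := hNle n hn
    omega
  set s' : Finset (Fin N) := (s.image (· - 1)).attachFin hbound with hs'def
  have hs'mem : ∀ i : Fin N, i ∈ s' ↔ i.1 + 1 ∈ s := by
    intro i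
    rw [hs'def, Finset.mem_attachFin, Finset.mem_image]
    constructor
    · rintro ⟨n, hn, hni⟩
      have h1 := hs1 n hn
      have heq : n = i.1 + 1 := by omega
      rwa [← heq]
    · intro h
      exact ⟨i.1 + 1, h, by omega⟩
  set E := ⋂ n ∈ s, {ω | relRank X n ω = f n} with hEdef
  have hEmeas : MeasurableSet E := by
    refine MeasurableSet.biInter (Set.to_countable _) fun n _ => ?_
    exact (measurable_relRank hmeas n) (measurableSet_singleton (f n))
  have hmeasA : ∀ σ : Equiv.Perm (Fin N), MeasurableSet (vecX X N ⁻¹' ordSet N σ) := fun σ =>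
    (measurable_vecX hmeas N) (measurableSet_ordSet N σ)
  have hdisjA : Pairwise (Function.onFun Disjoint fun σ : Equiv.Perm (Fin N) =>
      vecX X N ⁻¹' ordSet N σ) := fun σ τ h => (ordSet_disjoint N h).preimage _
  set U := ⋃ σ : Equiv.Perm (Fin N), vecX X N ⁻¹' ordSet N σ with hUdef
  have hdiffnull : P (E \ U) = 0 := by
    refine measure_mono_null ?_ (tie_null hmeas hindep hid hcont N)
    rintro ω ⟨-, hnU⟩
    intro hinj
    obtain ⟨σ, hσ⟩ := injective_mem_ordSet hinj
    exact hnU (Set.mem_iUnion.2 ⟨σ, hσ⟩)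
  have hEU : P E = P (E ∩ U) := by
    refine le_antisymm ?_ (measure_mono Set.inter_subset_left)
    calc P E = P ((E ∩ U) ∪ (E \ U)) := by rw [Set.inter_union_diff]
      _ ≤ P (E ∩ U) + P (E \ U) := measure_union_le _ _
      _ = P (E ∩ U) := by rw [hdiffnull, add_zero]
  have hsplit : P E = ∑ σ : Equiv.Perm (Fin N), P (E ∩ (vecX X N ⁻¹' ordSet N σ)) := by
    rw [hEU, hUdef, Set.inter_iUnion,
      measure_iUnion (fun σ τ h => ((hdisjA h).mono Set.inter_subset_right
        Set.inter_subset_right)) (fun σ => hEmeas.inter (hmeasA σ)), tsum_fintype]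
  set Q : Equiv.Perm (Fin N) → Prop := fun σ => ∀ i ∈ s', rankPerm σ.symm i = f (i.1 + 1)
    with hQdef
  have hterm : ∀ σ, P (E ∩ (vecX X N ⁻¹' ordSet N σ))
      = if Q σ then ((N.factorial : ℝ≥0∞))⁻¹ else 0 := by
    intro σ
    by_cases hc : Q σ
    · rw [if_pos hc, ← ordEvent_prob hmeas hindep hid hcont N σ]
      congr 1
      rw [Set.inter_eq_right]
      intro ω hω
      have hω' : StrictMono (vecX X N ω ∘ σ) := hω
      rw [hEdef]
      refine Set.mem_iInter₂.2 fun n hn => ?_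
      have h1 := hs1 n hn
      have h2 := hNle n hn
      set i : Fin N := ⟨n - 1, by omega⟩ with hidef
      have hi : i.1 + 1 = n := by rw [hidef]; show n - 1 + 1 = n; omega
      have his' : i ∈ s' := (hs'mem i).2 (by rw [hi]; exact hn)
      have hr := relRank_eq_rankPerm hω' i
      show relRank X n ω = f n
      rw [← hi, hr, hc i his']
    · rw [if_neg hc]
      simp only [hQdef] at hc
      push_neg at hc
      obtain ⟨i, his', hic⟩ := hc
      have hempty : E ∩ (vecX X N ⁻¹' ordSet N σ) = ∅ := by
        ext ω
        simp only [Set.mem_inter_iff, Set.mem_empty_iff_false, iff_false, not_and]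
        intro hωE hωA
        have h1 : StrictMono (vecX X N ω ∘ σ) := hωA
        have h2 := relRank_eq_rankPerm h1 i
        have h3 : relRank X (i.1 + 1) ω = f (i.1 + 1) :=
          Set.mem_iInter₂.1 hωE (i.1 + 1) ((hs'mem i).1 his')
        exact hic (by rw [← h2, h3])
      rw [hempty, measure_empty]
  have hcount : (Finset.univ.filter Q).card = ∏ i ∈ s'ᶜ, (i.1 + 1) := by
    have hbij : (Finset.univ.filter Q).card
        = ((Finset.univ.filter fun ρ : Equiv.Perm (Fin N) =>
            ∀ i ∈ s', rankPerm ρ i = f (i.1 + 1))).card := by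
      apply Finset.card_bij (fun σ _ => σ.symm)
      · intro σ hσ
        simp only [Finset.mem_filter, Finset.mem_univ, true_and, hQdef] at hσ ⊢
        exact hσ
      · intro σ hσ τ hτ h
        simpa using congrArg Equiv.symm h
      · intro ρ hρ
        refine ⟨ρ.symm, ?_, by simp⟩
        simp only [Finset.mem_filter, Finset.mem_univ, true_and, hQdef] at hρ ⊢
        simpa using hρ
    rw [hbij, card_compatible s' (fun i => f (i.1 + 1)) ?_]
    intro i hi
    have := hf (i.1 + 1) ((hs'mem i).1 hi)
    exact ⟨this.1, this.2⟩
  rw [hsplit, Finset.sum_congr rfl fun σ _ => hterm σ, ← Finset.sum_filter,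
    Finset.sum_const, nsmul_eq_mul, hcount]
  have hsimg : s = s'.image (fun i : Fin N => i.1 + 1) := by
    ext n
    simp only [Finset.mem_image]
    constructor
    · intro hn
      have h1 := hs1 n hn
      have h2 := hNle n hn
      refine ⟨⟨n - 1, by omega⟩, (hs'mem _).2 ?_, by show n - 1 + 1 = n; omega⟩
      show (n - 1) + 1 ∈ s
      rwa [show n - 1 + 1 = n by omega]
    · rintro ⟨i, hi, rfl⟩
      exact (hs'mem i).1 hi
  have hprods : ∏ n ∈ s, ((n : ℝ≥0∞))⁻¹ = ∏ i ∈ s', (((i.1 + 1 : ℕ) : ℝ≥0∞))⁻¹ := by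
    rw [hsimg]
    rw [Finset.prod_image (fun a _ b _ h => Fin.ext (by omega : a.1 = b.1))]
  set a : ℕ := ∏ i ∈ s', (i.1 + 1) with hadef
  set b : ℕ := ∏ i ∈ s'ᶜ, (i.1 + 1) with hbdef
  have hab : a * b = N.factorial := by
    rw [hadef, hbdef, Finset.prod_mul_prod_compl]
    calc ∏ i : Fin N, (i.1 + 1) = ∏ i ∈ Finset.range N, (i + 1) :=
          Fin.prod_univ_eq_prod_range _ _
      _ = N.factorial := Finset.prod_range_add_one_eq_factorial N
  have ha0 : (a : ℝ≥0∞) ≠ 0 := by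
    refine Nat.cast_ne_zero.2 ?_
    rw [hadef]
    exact (Finset.prod_pos fun i _ => Nat.succ_pos _).ne'
  have hb0 : (b : ℝ≥0∞) ≠ 0 := by
    refine Nat.cast_ne_zero.2 ?_
    rw [hbdef]
    exact (Finset.prod_pos fun i _ => Nat.succ_pos _).ne'
  have hat : (a : ℝ≥0∞) ≠ ⊤ := ENNReal.natCast_ne_top _
  have hbt : (b : ℝ≥0∞) ≠ ⊤ := ENNReal.natCast_ne_top _
  have hprodinv : ∏ i ∈ s', (((i.1 + 1 : ℕ) : ℝ≥0∞))⁻¹ = ((a : ℝ≥0∞))⁻¹ := by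
    have h1 : (∏ i ∈ s', (((i.1 + 1 : ℕ) : ℝ≥0∞))⁻¹) * (a : ℝ≥0∞) = 1 := by
      rw [hadef, Nat.cast_prod, ← Finset.prod_mul_distrib]
      rw [Finset.prod_congr rfl fun i (_ : i ∈ s') =>
        ENNReal.inv_mul_cancel (Nat.cast_ne_zero.2 (Nat.succ_ne_zero _))
          (ENNReal.natCast_ne_top _)]
      exact Finset.prod_const_one
    calc (∏ i ∈ s', (((i.1 + 1 : ℕ) : ℝ≥0∞))⁻¹)
        = (∏ i ∈ s', (((i.1 + 1 : ℕ) : ℝ≥0∞))⁻¹) * ((a : ℝ≥0∞) * ((a : ℝ≥0∞))⁻¹) := by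
          rw [ENNReal.mul_inv_cancel ha0 hat, mul_one]
      _ = ((∏ i ∈ s', (((i.1 + 1 : ℕ) : ℝ≥0∞))⁻¹) * (a : ℝ≥0∞)) * ((a : ℝ≥0∞))⁻¹ := by
          rw [mul_assoc]
      _ = ((a : ℝ≥0∞))⁻¹ := by rw [h1, one_mul]
  rw [hprods, hprodinv, ← hab, Nat.cast_mul, ENNReal.mul_inv (Or.inl ha0) (Or.inl hat)]
  rw [← mul_assoc, mul_comm (b : ℝ≥0∞) ((a : ℝ≥0∞))⁻¹, mul_assoc,
    ENNReal.mul_inv_cancel hb0 hbt, mul_one]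

end MeasureSide

end RelRankAux

/-- For i.i.d. random variables with continuous (atomless) common distribution, the relative
ranks `R_n` are independent, and `R_n` is uniform on `{1,…,n}`: `P[R_n = i] = 1/n`. -/
theorem relRank_iIndep_uniform {Ω : Type*} [MeasurableSpace Ω] (P : Measure Ω)
    [IsProbabilityMeasure P] (X : ℕ → Ω → ℝ) (hmeas : ∀ i, Measurable (X i))
    (hindep : iIndepFun X P)
    (μ : Measure ℝ) (hid : ∀ i, Measure.map (X i) P = μ)
    (hcont : ∀ y : ℝ, μ {y} = 0) :
    iIndepFun (fun n => relRank X n) P ∧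
    ∀ n, 1 ≤ n → ∀ i, 1 ≤ i → i ≤ n → P {ω | relRank X n ω = i} = 1 / (n : ℝ≥0∞) := by
  classical
  open RelRankAux in
  have hsingle : ∀ n, 1 ≤ n → ∀ i, 1 ≤ i → i ≤ n →
      P {ω | relRank X n ω = i} = ((n : ℝ≥0∞))⁻¹ := by
    intro n hn i h1 h2
    have h := master (P := P) hmeas hindep hid hcont {n}
      (by intro m hm; rw [Finset.mem_singleton] at hm; omega)
      (fun _ => i)
      (by intro m hm; rw [Finset.mem_singleton] at hm; subst hm; exact ⟨h1, h2⟩)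
    simpa using h
  constructor
  · rw [iIndepFun_iff_iIndep]
    set π : ℕ → Set (Set Ω) := fun n => {S | ∃ i : ℕ, S = relRank X n ⁻¹' {i}} with hπ
    refine iIndepSets.iIndep
      (fun n => (measurable_relRank hmeas n).comap_le) π ?_ ?_ ?_
    · -- pi systems
      intro n S hS T hT hST
      obtain ⟨i, rfl⟩ := hS
      obtain ⟨j, rfl⟩ := hT
      obtain ⟨ω, hω1, hω2⟩ := hST
      have hij : i = j := by
        simp only [Set.mem_preimage, Set.mem_singleton_iff] at hω1 hω2
        rw [← hω1, ← hω2]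
      subst hij
      rw [Set.inter_self]
      exact ⟨i, rfl⟩
    · -- generateFrom
      intro n
      refine le_antisymm ?_ (MeasurableSpace.generateFrom_le ?_)
      · intro S hS
        rw [MeasurableSpace.measurableSet_comap] at hS
        obtain ⟨S', -, rfl⟩ := hS
        have hUeq : relRank X n ⁻¹' S' = ⋃ i ∈ S', relRank X n ⁻¹' {i} := by
          ext ω; simp
        rw [hUeq]
        exact MeasurableSet.biUnion (Set.to_countable _) fun i _ =>
          MeasurableSpace.measurableSet_generateFrom ⟨i, rfl⟩
      · rintro S ⟨i, rfl⟩
        exact ⟨{i}, MeasurableSpace.measurableSet_top, rfl⟩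
    · -- independence of the pi systems
      rw [iIndepSets_iff]
      intro t g hg
      have hex : ∀ n ∈ t, ∃ i : ℕ, g n = relRank X n ⁻¹' {i} := fun n hn => hg n hn
      set c : ℕ → ℕ := fun n =>
        if h : ∃ i : ℕ, g n = relRank X n ⁻¹' {i} then h.choose else 0 with hcdef
      have hgc : ∀ n ∈ t, g n = {ω | relRank X n ω = c n} := by
        intro n hn
        have h := hex n hn
        rw [hcdef]
        simp only [dif_pos h]
        exact h.choose_spec
      have hIeq : ⋂ n ∈ t, g n = ⋂ n ∈ t, {ω | relRank X n ω = c n} := by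
        ext ω
        simp only [Set.mem_iInter]
        exact ⟨fun h n hn => by rw [← hgc n hn]; exact h n hn,
          fun h n hn => by rw [hgc n hn]; exact h n hn⟩
      have hPeq : ∏ n ∈ t, P (g n) = ∏ n ∈ t, P {ω | relRank X n ω = c n} :=
        Finset.prod_congr rfl fun n hn => by rw [hgc n hn]
      rw [hIeq, hPeq]
      by_cases hbad : ∃ n ∈ t, ¬ ((n = 0 ∧ c n = 0) ∨ (1 ≤ n ∧ 1 ≤ c n ∧ c n ≤ n))
      · obtain ⟨n₀, hn₀t, hbad₀⟩ := hbad
        have hempty : {ω | relRank X n₀ ω = c n₀} = ∅ := by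
          ext ω
          simp only [Set.mem_setOf_eq, Set.mem_empty_iff_false, iff_false]
          intro h
          apply hbad₀
          rcases Nat.eq_zero_or_pos n₀ with h0 | h1
          · subst h0
            exact Or.inl ⟨rfl, by rw [← h, relRank_zero]⟩
          · exact Or.inr ⟨h1, by rw [← h]; exact one_le_relRank h1 ω,
              by rw [← h]; exact relRank_le _ ω⟩
        have h0 : P {ω | relRank X n₀ ω = c n₀} = 0 := by
          rw [hempty]; exact measure_empty
        have hL : P (⋂ n ∈ t, {ω | relRank X n ω = c n}) = 0 :=
          measure_mono_null (fun ω hω => Set.mem_iInter₂.1 hω n₀ hn₀t) h0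
        rw [hL]
        exact (Finset.prod_eq_zero hn₀t (by rw [hempty]; exact measure_empty)).symm
      · push_neg at hbad
        set t1 := t.filter (fun n => 1 ≤ n) with ht1def
        have hsub : t1 ⊆ t := Finset.filter_subset _ _
        have huniv : ∀ n ∈ t, n ∉ t1 → {ω | relRank X n ω = c n} = Set.univ := by
          intro n hn hn1
          have hn0 : n = 0 := by
            rw [ht1def, Finset.mem_filter] at hn1
            push_neg at hn1
            have := hn1 hn
            omega
          subst hn0
          have hc0 : c 0 = 0 := by
            rcases hbad 0 hn with ⟨-, h⟩ | ⟨h, -⟩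
            · exact h
            · omega
          ext ω
          simp [relRank_zero, hc0]
        have hIeq2 : ⋂ n ∈ t, {ω | relRank X n ω = c n}
            = ⋂ n ∈ t1, {ω | relRank X n ω = c n} := by
          ext ω
          simp only [Set.mem_iInter]
          constructor
          · intro h n hn
            exact h n (hsub hn)
          · intro h n hn
            by_cases hn1 : n ∈ t1
            · exact h n hn1
            · rw [huniv n hn hn1]
              trivial
        have hPeq2 : ∏ n ∈ t, P {ω | relRank X n ω = c n}
            = ∏ n ∈ t1, P {ω | relRank X n ω = c n} := by
          refine (Finset.prod_subset hsub fun n hn hn1 => ?_).symm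
          rw [huniv n hn hn1]
          exact measure_univ
        have ht1good : ∀ n ∈ t1, 1 ≤ c n ∧ c n ≤ n := by
          intro n hn
          rw [ht1def, Finset.mem_filter] at hn
          rcases hbad n hn.1 with ⟨h0, -⟩ | ⟨-, h⟩
          · omega
          · exact h
        have ht1pos : ∀ n ∈ t1, 1 ≤ n := by
          intro n hn
          rw [ht1def, Finset.mem_filter] at hn
          exact hn.2
        rw [hIeq2, hPeq2,
          master (P := P) hmeas hindep hid hcont t1 ht1pos c ht1good]
        refine Finset.prod_congr rfl fun n hn => ?_
        exact (hsingle n (ht1pos n hn) (c n) (ht1good n hn).1 (ht1good n hn).2).symm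
  · intro n hn i h1 h2
    rw [one_div]
    exact hsingle n hn i h1 h2
end

section
/- One-dimensional limit for the continuous-time r-th order extremal process: assume (r − Q(a(r)x+b(r)))/√r → h(x) for all x with h(x) ∈ ℝ. Then for each fixed t > 0, P[(Y^{(r)}(t) − b(r/t))/a(r/t) ≤ x] → Φ(√t · h(x)) as r → ∞, where Φ is the standard normal cdf. -/
open MeasureTheory ProbabilityTheory Filter Set
open scoped ENNReal NNReal Topology

lemma my_log_le_sub_half_sq {v : ℝ} (h1 : -1 < v) (h2 : v ≤ 0) :
    Real.log (1 + v) ≤ v - v ^ 2 / 2 := by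
  set g : ℝ → ℝ := fun w => w - w ^ 2 / 2 - Real.log (1 + w) with hg
  have hdiff : ∀ w : ℝ, 0 < 1 + w → HasDerivAt g (1 - w - (1 + w)⁻¹) w := by
    intro w hw1
    have h1' : HasDerivAt (fun w : ℝ => Real.log (1 + w)) (1 + w)⁻¹ w := by
      have := (Real.hasDerivAt_log (ne_of_gt hw1)).comp w
        ((hasDerivAt_id w).const_add 1)
      simpa [Function.comp_def] using this
    have h2' : HasDerivAt (fun w : ℝ => w - w ^ 2 / 2) (1 - w) w := by
      have h3 := (hasDerivAt_id w).sub ((hasDerivAt_pow 2 w).div_const 2)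
      exact h3.congr_deriv (by push_cast; ring)
    exact h2'.sub h1'
  have hderiv : ∀ w ∈ interior (Ioc (-1 : ℝ) 0), deriv g w ≤ 0 := by
    intro w hw
    rw [interior_Ioc] at hw
    have hw1 : (0:ℝ) < 1 + w := by nlinarith [hw.1]
    rw [(hdiff w hw1).deriv]
    have hle : 1 - w ≤ 1 / (1 + w) := (le_div_iff₀ hw1).2 (by nlinarith [sq_nonneg w])
    rw [inv_eq_one_div]
    linarith
  have hcont : ContinuousOn g (Ioc (-1 : ℝ) 0) := by
    intro w hw
    have hw1 : (0:ℝ) < 1 + w := by nlinarith [hw.1]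
    exact ((hdiff w hw1).continuousAt).continuousWithinAt
  have hanti := antitoneOn_of_deriv_nonpos (convex_Ioc (-1 : ℝ) 0) hcont
    (fun w hw => by
      rw [interior_Ioc] at hw
      have hw1 : (0:ℝ) < 1 + w := by nlinarith [hw.1]
      exact (hdiff w hw1).differentiableAt.differentiableWithinAt) hderiv
  have := hanti (show v ∈ Ioc (-1:ℝ) 0 from ⟨h1, h2⟩)
    (show (0:ℝ) ∈ Ioc (-1:ℝ) 0 from ⟨by norm_num, le_rfl⟩) h2
  simp [hg] at this
  linarith

lemma my_hasDerivAt (n : ℕ) (x : ℝ) :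
    HasDerivAt (fun y => -∑ k ∈ Finset.range (n + 1), Real.exp (-y) * y ^ k / (k.factorial : ℝ))
      (Real.exp (-x) * x ^ n / (n.factorial : ℝ)) x := by
  have he : ∀ z : ℝ, HasDerivAt (fun y : ℝ => Real.exp (-y)) (-Real.exp (-z)) z := by
    intro z
    have := (Real.hasDerivAt_exp (-z)).comp z ((hasDerivAt_id z).neg)
    exact this.congr_deriv (by ring)
  induction n with
  | zero =>
      have heq : (fun y : ℝ => -∑ k ∈ Finset.range 1, Real.exp (-y) * y ^ k / (k.factorial : ℝ))
          = fun y => -(Real.exp (-y)) := by funext y; simp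
      rw [heq]
      exact (he x).neg.congr_deriv (by simp)
  | succ n ih =>
      have hterm := ((he x).mul (hasDerivAt_pow (n + 1) x)).div_const (((n+1).factorial : ℝ))
      have key := ih.sub hterm
      have heq : (fun y : ℝ =>
          (-∑ k ∈ Finset.range (n + 1), Real.exp (-y) * y ^ k / (k.factorial : ℝ)) -
            Real.exp (-y) * y ^ (n + 1) / ((n+1).factorial : ℝ)) =
          fun y : ℝ => -∑ k ∈ Finset.range (n + 2), Real.exp (-y) * y ^ k / (k.factorial : ℝ) := by
        funext y
        conv_rhs => rw [show n + 2 = (n + 1) + 1 from rfl, Finset.sum_range_succ]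
        ring
      have key := (show HasDerivAt (fun y : ℝ =>
          (-∑ k ∈ Finset.range (n + 1), Real.exp (-y) * y ^ k / (k.factorial : ℝ)) -
            Real.exp (-y) * y ^ (n + 1) / ((n+1).factorial : ℝ)) _ x from key)
      rw [heq] at key
      convert key using 1
      have hfac : (((n+1).factorial : ℕ) : ℝ) = (n+1) * (n.factorial : ℝ) := by
        rw [Nat.factorial_succ]; push_cast; ring
      have hne : (n.factorial : ℝ) ≠ 0 := Nat.cast_ne_zero.2 (Nat.factorial_ne_zero n)
      simp only [Nat.add_sub_cancel, hfac]
      push_cast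
      field_simp
      ring

lemma my_integrableOn (n : ℕ) {l : ℝ} (hl : 0 ≤ l) :
    IntegrableOn (fun x => Real.exp (-x) * x ^ n / (n.factorial : ℝ)) (Ioi l) := by
  have h0 : IntegrableOn (fun x : ℝ => Real.exp (-x) * x ^ ((n + 1 : ℝ) - 1)) (Ioi 0) :=
    Real.GammaIntegral_convergent (by positivity)
  have h1 : IntegrableOn (fun x : ℝ => Real.exp (-x) * x ^ n) (Ioi 0) := by
    apply h0.congr_fun _ measurableSet_Ioi
    intro x hx
    have hcast : ((n:ℝ) + 1 - 1 : ℝ) = (n : ℝ) := by ring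
    simp only [hcast, Real.rpow_natCast]
  exact ((h1.mono_set (Ioi_subset_Ioi hl)).div_const _)

lemma my_integral_Ioi (n : ℕ) {l : ℝ} (hl : 0 ≤ l) :
    ∫ x in Ioi l, Real.exp (-x) * x ^ n / (n.factorial : ℝ) =
      ∑ k ∈ Finset.range (n + 1), Real.exp (-l) * l ^ k / (k.factorial : ℝ) := by
  have := integral_Ioi_of_hasDerivAt_of_tendsto'
    (f := fun y => -∑ k ∈ Finset.range (n + 1), Real.exp (-y) * y ^ k / (k.factorial : ℝ))
    (f' := fun x => Real.exp (-x) * x ^ n / (n.factorial : ℝ))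
    (a := l) (m := 0) (fun x _ => my_hasDerivAt n x) (my_integrableOn n hl) ?_
  · rw [this]; simp
  · have h2 : Tendsto (fun y : ℝ =>
        ∑ k ∈ Finset.range (n + 1), Real.exp (-y) * y ^ k / (k.factorial : ℝ)) atTop (𝓝 0) := by
      have h0 : (0:ℝ) = ∑ k ∈ Finset.range (n + 1), (0:ℝ) := by simp
      rw [h0]
      apply tendsto_finset_sum
      intro k _
      have := (Real.tendsto_pow_mul_exp_neg_atTop_nhds_zero k).div_const (k.factorial : ℝ)
      rw [zero_div] at this
      apply this.congr
      intro y
      ring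
    simpa using h2.neg

lemma my_integral_total (n : ℕ) :
    ∫ x in Ioi (0:ℝ), Real.exp (-x) * x ^ n / (n.factorial : ℝ) = 1 := by
  rw [my_integral_Ioi n le_rfl, Finset.sum_eq_single 0]
  · simp
  · intro k _ hk
    rw [zero_pow hk]
    simp
  · simp

lemma my_sqrt_tendsto : Tendsto (fun r : ℕ => Real.sqrt r) atTop atTop := by
  apply tendsto_atTop_atTop.2
  intro b
  refine ⟨⌈b⌉₊ ^ 2, fun n hn => ?_⟩
  have h1 : (b:ℝ) ≤ Real.sqrt ((⌈b⌉₊:ℕ)^2 : ℕ) := by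
    push_cast
    rw [Real.sqrt_sq (Nat.cast_nonneg _)]
    exact Nat.le_ceil b
  exact h1.trans (Real.sqrt_le_sqrt (by exact_mod_cast hn))

lemma my_stirling :
    Tendsto (fun r : ℕ => Real.sqrt r * (r:ℝ)^r * Real.exp (-(r:ℝ)) / (r.factorial : ℝ))
      atTop (𝓝 ((Real.sqrt (2 * Real.pi))⁻¹)) := by
  have hlim : Tendsto (fun r : ℕ => (Real.sqrt 2 * Stirling.stirlingSeq r)⁻¹) atTop
      (𝓝 ((Real.sqrt 2 * Real.sqrt Real.pi)⁻¹)) := by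
    refine (Tendsto.inv₀ (tendsto_const_nhds.mul Stirling.tendsto_stirlingSeq_sqrt_pi) ?_)
    positivity
  have heq : (Real.sqrt 2 * Real.sqrt Real.pi)⁻¹ = (Real.sqrt (2 * Real.pi))⁻¹ := by
    rw [← Real.sqrt_mul (by norm_num)]
  rw [heq] at hlim
  apply hlim.congr'
  filter_upwards [eventually_ge_atTop 1] with r hr
  have hr0 : (0:ℝ) < r := by exact_mod_cast hr
  rw [Stirling.stirlingSeq]
  have h1 : ((r:ℝ)/Real.exp 1)^r = (r:ℝ)^r * Real.exp (-(r:ℝ)) := by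
    rw [div_pow, Real.exp_one_pow, Real.exp_neg]
    ring
  have hsq : Real.sqrt (2*(r:ℝ)) = Real.sqrt 2 * Real.sqrt r := Real.sqrt_mul (by norm_num) _
  rw [h1, hsq]
  have h2 : Real.sqrt 2 ≠ 0 := by positivity
  have h3 : Real.sqrt r ≠ 0 := by positivity
  have h4 : (r.factorial : ℝ) ≠ 0 := Nat.cast_ne_zero.2 (Nat.factorial_ne_zero r)
  have h5 : (r:ℝ)^r ≠ 0 := by positivity
  have h6 : Real.exp (-(r:ℝ)) ≠ 0 := Real.exp_ne_zero _
  field_simp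

lemma my_exponent_tendsto (u : ℝ) :
    Tendsto (fun r : ℕ => ((r:ℝ) - 1) * Real.log (1 + u / Real.sqrt r) - u * Real.sqrt r)
      atTop (𝓝 (-(u^2/2))) := by
  set v : ℕ → ℝ := fun r => u / Real.sqrt r with hv
  have hv0 : Tendsto v atTop (𝓝 0) := Tendsto.div_atTop tendsto_const_nhds my_sqrt_tendsto
  have hvsmall : ∀ᶠ r : ℕ in atTop, |v r| < 1/2 := by
    have habs : Tendsto (fun r => |v r|) atTop (𝓝 0) := by simpa using hv0.abs
    exact habs.eventually_lt_const (by norm_num)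
  have hterm2 : Tendsto (fun r : ℕ => ((r:ℝ) - 1) *
      (Real.log (1 + v r) - v r + (v r)^2/2)) atTop (𝓝 0) := by
    have hbound : Tendsto (fun r : ℕ => 2 * |u|^3 / Real.sqrt r) atTop (𝓝 0) :=
      Tendsto.div_atTop tendsto_const_nhds my_sqrt_tendsto
    apply squeeze_zero_norm' ?_ hbound
    filter_upwards [eventually_ge_atTop 1, hvsmall] with r hr hsm
    have hr0 : (0:ℝ) < r := by exact_mod_cast hr
    have hs : (0:ℝ) < Real.sqrt r := Real.sqrt_pos.2 hr0
    have hlt1 : |(-(v r))| < 1 := by rw [abs_neg]; linarith [hsm]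
    have hkey := Real.abs_log_sub_add_sum_range_le hlt1 2
    have hsum : (∑ i ∈ Finset.range 2, (-(v r)) ^ (i+1) / (i+1)) = -(v r) + (v r)^2/2 := by
      rw [Finset.sum_range_succ, Finset.sum_range_one]
      push_cast
      ring
    rw [hsum, show (1 : ℝ) - (-(v r)) = 1 + v r by ring] at hkey
    have hkey2 : |Real.log (1 + v r) - v r + (v r)^2/2| ≤ |v r|^3 / (1 - |v r|) := by
      calc |Real.log (1 + v r) - v r + (v r)^2/2|
          = |(-(v r) + (v r)^2/2) + Real.log (1 + v r)| := by ring_nf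
        _ ≤ |(-(v r))|^3 / (1 - |(-(v r))|) := hkey
        _ = |v r|^3 / (1 - |v r|) := by rw [abs_neg]
    have hd : (1:ℝ)/2 ≤ 1 - |v r| := by linarith
    have hkey3 : |Real.log (1 + v r) - v r + (v r)^2/2| ≤ 2 * |v r|^3 := by
      have habs : (0:ℝ) ≤ |v r|^3 := by positivity
      calc |Real.log (1 + v r) - v r + (v r)^2/2| ≤ |v r|^3 / (1 - |v r|) := hkey2
        _ ≤ |v r|^3 / (1/2) := by
            apply div_le_div_of_nonneg_left habs (by norm_num) hd
        _ = 2 * |v r|^3 := by ring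
    have hvr : |v r| = |u| / Real.sqrt r := by
      rw [hv]; simp [abs_div, abs_of_pos hs]
    calc ‖((r:ℝ) - 1) * (Real.log (1 + v r) - v r + (v r)^2/2)‖
        = |(r:ℝ) - 1| * |Real.log (1 + v r) - v r + (v r)^2/2| := by
          rw [Real.norm_eq_abs, abs_mul]
      _ ≤ (r:ℝ) * (2 * |v r|^3) := by
          have hr1 : (1:ℝ) ≤ (r:ℝ) := by exact_mod_cast hr
          apply mul_le_mul _ hkey3 (abs_nonneg _) hr0.le
          rw [abs_of_nonneg (by linarith : (0:ℝ) ≤ (r:ℝ) - 1)]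
          linarith
      _ = 2 * |u|^3 / Real.sqrt r := by
          have h2 : Real.sqrt r ^ 2 = (r:ℝ) := Real.sq_sqrt hr0.le
          rw [hvr, div_pow, show Real.sqrt r ^ 3 = (r:ℝ) * Real.sqrt r by
            rw [pow_succ, h2]]
          field_simp
  have h1 : Tendsto (fun r : ℕ => ((r:ℝ)-1) * (v r)^2 / 2) atTop (𝓝 (u^2/2)) := by
    have hr1 : Tendsto (fun r : ℕ => (1 - 1/(r:ℝ)) * (u^2/2)) atTop (𝓝 (u^2/2)) := by
      have h0 : Tendsto (fun r : ℕ => (1:ℝ) - 1/(r:ℝ)) atTop (𝓝 (1 - 0)) :=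
        tendsto_const_nhds.sub tendsto_one_div_atTop_nhds_zero_nat
      have := h0.mul (tendsto_const_nhds (x := u^2/2))
      simpa using this
    apply hr1.congr'
    filter_upwards [eventually_ge_atTop 1] with r hr
    have hr0 : (0:ℝ) < r := by exact_mod_cast hr
    have hv2 : (v r)^2 = u^2 / r := by
      rw [hv]; simp only []
      rw [div_pow, Real.sq_sqrt hr0.le]
    rw [hv2]
    field_simp
  have hfinal := (hterm2.sub h1).sub hv0
  have : (0:ℝ) - u^2/2 - 0 = -(u^2/2) := by ring
  rw [this] at hfinal
  apply hfinal.congr'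
  filter_upwards [eventually_ge_atTop 1] with r hr
  have hr0 : (0:ℝ) < r := by exact_mod_cast hr
  have hs : (0:ℝ) < Real.sqrt r := Real.sqrt_pos.2 hr0
  have hrv : (r:ℝ) * v r = u * Real.sqrt r := by
    rw [hv]; simp only []
    calc (r:ℝ) * (u / Real.sqrt r) = u * ((r:ℝ) / Real.sqrt r) := by ring
      _ = u * Real.sqrt r := by rw [Real.div_sqrt]
  have expand : ((r:ℝ) - 1) * (Real.log (1 + v r) - v r + (v r)^2/2)
      - ((r:ℝ)-1) * (v r)^2 / 2 - v r
      = ((r:ℝ) - 1) * Real.log (1 + v r) - (r:ℝ) * v r := by ring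
  rw [expand, hrv]

lemma my_F_eq (r : ℕ) (hr : 1 ≤ r) (u : ℝ) (hu : -(Real.sqrt r) < u) :
    Real.sqrt r * (Real.exp (-(Real.sqrt r * u + r)) * (Real.sqrt r * u + r)^(r-1) /
        ((r-1).factorial : ℝ))
      = (Real.sqrt r * (r:ℝ)^r * Real.exp (-(r:ℝ)) / (r.factorial : ℝ)) *
        Real.exp (((r:ℝ) - 1) * Real.log (1 + u / Real.sqrt r) - u * Real.sqrt r) := by
  have hr0 : (0:ℝ) < r := by exact_mod_cast hr
  set s := Real.sqrt r with hsdef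
  have hs : 0 < s := Real.sqrt_pos.2 hr0
  have hss : s * s = (r:ℝ) := Real.mul_self_sqrt hr0.le
  have hv1 : -1 < u / s := by
    rw [lt_div_iff₀ hs]
    linarith [hu]
  have h1v : 0 < 1 + u / s := by linarith
  have hx : s * u + (r:ℝ) = (r:ℝ) * (1 + u / s) := by
    field_simp
    ring_nf
    nlinarith [hss]
  have hcast : (((r:ℕ) - 1 : ℕ) : ℝ) = (r:ℝ) - 1 := by
    push_cast [Nat.cast_sub hr]
    ring
  have hpow : (s * u + (r:ℝ))^(r-1) = (r:ℝ)^(r-1) * (1 + u/s)^(r-1) := by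
    rw [hx, mul_pow]
  have hlog : (1 + u/s)^(r-1) = Real.exp (((r:ℝ) - 1) * Real.log (1 + u/s)) := by
    rw [← hcast, Real.exp_nat_mul, Real.exp_log h1v]
  have hexp : Real.exp (-(s * u + (r:ℝ))) = Real.exp (-(r:ℝ)) * Real.exp (-(u * s)) := by
    rw [← Real.exp_add]
    ring_nf
  have hfac : (r.factorial : ℝ) = (r:ℝ) * ((r-1).factorial : ℝ) := by
    rw [← Nat.mul_factorial_pred (by omega : r ≠ 0)]
    push_cast
    ring
  have hrpow : (r:ℝ)^r = (r:ℝ)^(r-1) * (r:ℝ) := by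
    rw [← pow_succ, Nat.sub_add_cancel hr]
  have hsplit : Real.exp (((r:ℝ) - 1) * Real.log (1 + u/s) - u * s)
      = Real.exp (((r:ℝ) - 1) * Real.log (1 + u/s)) * Real.exp (-(u * s)) := by
    rw [← Real.exp_add]
    ring_nf
  rw [hpow, hexp, hfac, hrpow, hsplit, ← hlog]
  have hfne : ((r-1).factorial : ℝ) ≠ 0 := Nat.cast_ne_zero.2 (Nat.factorial_ne_zero _)
  field_simp

lemma my_E_bound (r : ℕ) (hr : 2 ≤ r) {u M : ℝ} (hM : 0 ≤ M) (hu1 : -(Real.sqrt r) < u)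
    (hu2 : u ≤ M) :
    ((r:ℝ) - 1) * Real.log (1 + u / Real.sqrt r) - u * Real.sqrt r ≤ 1 + M^2/4 - u^2/4 := by
  have hr0 : (0:ℝ) < r := by
    have : (0:ℕ) < r := lt_of_lt_of_le (by norm_num) hr
    exact_mod_cast this
  have hr2 : (2:ℝ) ≤ r := by exact_mod_cast hr
  set s := Real.sqrt r with hsdef
  have hs : 0 < s := Real.sqrt_pos.2 hr0
  have hss : s * s = (r:ℝ) := Real.mul_self_sqrt hr0.le
  set v := u / s with hvdef
  have hv1 : -1 < v := by
    rw [hvdef, lt_div_iff₀ hs]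
    linarith [hu1]
  have huv : u = v * s := by
    rw [hvdef]
    field_simp
  have hus : u * s = v * (r:ℝ) := by
    rw [huv, ← hss]
    ring
  have hu2r : u^2 = v^2 * (r:ℝ) := by
    rw [huv, ← hss]
    ring
  rcases le_or_gt v 0 with hv0 | hv0
  · have hlog := my_log_le_sub_half_sq hv1 hv0
    have hr1 : (0:ℝ) ≤ (r:ℝ) - 1 := by linarith
    have h1 : ((r:ℝ)-1) * Real.log (1+v) ≤ ((r:ℝ)-1) * (v - v^2/2) :=
      mul_le_mul_of_nonneg_left hlog hr1
    have hq : u^2/4 ≤ ((r:ℝ)-1) * v^2 / 2 := by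
      rw [hu2r]
      nlinarith [sq_nonneg v, mul_nonneg (by linarith : (0:ℝ) ≤ (r:ℝ) - 2) (sq_nonneg v)]
    have hnegv : -v ≤ 1 := by linarith
    calc ((r:ℝ) - 1) * Real.log (1 + v) - u * s
        = ((r:ℝ) - 1) * Real.log (1 + v) - v * r := by rw [hus]
      _ ≤ ((r:ℝ)-1) * (v - v^2/2) - v * r := by linarith
      _ = -v - ((r:ℝ)-1) * v^2 / 2 := by ring
      _ ≤ 1 - u^2/4 := by linarith
      _ ≤ 1 + M^2/4 - u^2/4 := by nlinarith [sq_nonneg M]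
  · have hlog : Real.log (1+v) ≤ v := by
      have := Real.log_le_sub_one_of_pos (by linarith : (0:ℝ) < 1 + v)
      linarith
    have hupos : 0 < u := by
      rw [huv]
      positivity
    have h1 : ((r:ℝ)-1) * Real.log (1+v) ≤ ((r:ℝ)-1) * v :=
      mul_le_mul_of_nonneg_left hlog (by linarith)
    calc ((r:ℝ) - 1) * Real.log (1 + v) - u * s
        = ((r:ℝ) - 1) * Real.log (1 + v) - v * r := by rw [hus]
      _ ≤ ((r:ℝ)-1) * v - v * r := by linarith
      _ = -v := by ring
      _ ≤ 0 := by linarith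
      _ ≤ 1 + M^2/4 - u^2/4 := by nlinarith

lemma my_gaussian_pdf (u : ℝ) :
    gaussianPDFReal 0 1 u = (Real.sqrt (2 * Real.pi))⁻¹ * Real.exp (-(u^2/2)) := by
  simp [gaussianPDFReal]
  norm_num [neg_div]

lemma my_poisson_clt (lam : ℕ → ℝ) (hpos : ∀ r, 0 < lam r) (C : ℝ)
    (hc : Tendsto (fun r : ℕ => ((r:ℝ) - lam r) / Real.sqrt r) atTop (𝓝 C)) :
    Tendsto (fun r : ℕ => ∑ k ∈ Finset.range r,
        Real.exp (-(lam r)) * (lam r)^k / (k.factorial : ℝ))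
      atTop (𝓝 (1 - ∫ u in Iio (-C), gaussianPDFReal 0 1 u)) := by
  set c : ℕ → ℝ := fun r => ((r:ℝ) - lam r) / Real.sqrt r with hcdef
  set F : ℕ → ℝ → ℝ := fun r u => Real.sqrt r *
      (Real.exp (-(Real.sqrt r * u + r)) * (Real.sqrt r * u + r)^(r-1) /
        ((r-1).factorial : ℝ)) with hFdef
  set G : ℕ → ℝ → ℝ := fun r u => (Ioc (-(Real.sqrt r)) (-(c r))).indicator (F r) u with hGdef
  set M : ℝ := |C| + 1 with hMdef
  have hM0 : 0 ≤ M := by positivity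
  set K0 : ℝ := (Real.sqrt (2 * Real.pi))⁻¹ + 1 with hK0def
  have hK0pos : 0 < K0 := by positivity
  -- continuity of F r
  have hFcont : ∀ r : ℕ, Continuous (F r) := by
    intro r
    apply continuous_const.mul
    apply Continuous.div_const
    apply Continuous.mul
    · exact Real.continuous_exp.comp (continuous_neg.comp
        ((continuous_const.mul continuous_id).add continuous_const))
    · exact ((continuous_const.mul continuous_id).add continuous_const).pow _
  -- DCT
  have hDCT : Tendsto (fun r : ℕ => ∫ u, G r u) atTop
      (𝓝 (∫ u, (Iio (-C)).indicator (gaussianPDFReal 0 1) u)) := by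
    apply tendsto_integral_filter_of_dominated_convergence
      (bound := fun u => (K0 * Real.exp (1 + M^2/4)) * Real.exp (-(1/4) * u^2))
    · -- measurability
      apply Eventually.of_forall
      intro r
      exact (((hFcont r).measurable).indicator measurableSet_Ioc).aestronglyMeasurable
    · -- bound
      have hA_ev : ∀ᶠ r : ℕ in atTop,
          Real.sqrt r * (r:ℝ)^r * Real.exp (-(r:ℝ)) / (r.factorial : ℝ) ≤ K0 :=
        my_stirling.eventually_le_const (by rw [hK0def]; linarith)
      have hM_ev : ∀ᶠ r : ℕ in atTop, -(c r) ≤ M := by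
        have h1 : Tendsto (fun r : ℕ => |c r - C|) atTop (𝓝 0) := by
          have := (hc.sub_const C).abs
          simpa using this
        filter_upwards [h1.eventually_lt_const one_pos] with r hr
        have := abs_lt.1 hr
        rw [hMdef]
        cases' abs_cases C with h h <;> linarith [this.1, this.2]
      filter_upwards [eventually_ge_atTop 2, hA_ev, hM_ev] with r hr2 hA hMr
      apply Eventually.of_forall
      intro u
      by_cases hu : u ∈ Ioc (-(Real.sqrt r)) (-(c r))
      · rw [hGdef]
        simp only [indicator_of_mem hu]
        have hu1 : -(Real.sqrt r) < u := hu.1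
        have hu2 : u ≤ M := le_trans hu.2 hMr
        rw [hFdef]
        simp only []
        rw [my_F_eq r (le_trans (by norm_num) hr2) u hu1]
        have hAnn : (0:ℝ) ≤ Real.sqrt r * (r:ℝ)^r * Real.exp (-(r:ℝ)) / (r.factorial : ℝ) := by
          positivity
        rw [Real.norm_eq_abs, abs_of_nonneg (by positivity)]
        calc (Real.sqrt r * (r:ℝ)^r * Real.exp (-(r:ℝ)) / (r.factorial : ℝ)) *
            Real.exp (((r:ℝ) - 1) * Real.log (1 + u / Real.sqrt r) - u * Real.sqrt r)
            ≤ K0 * Real.exp (1 + M^2/4 - u^2/4) := by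
              apply mul_le_mul hA (Real.exp_le_exp.2 (my_E_bound r hr2 hM0 hu1 hu2))
                (Real.exp_pos _).le hK0pos.le
          _ = (K0 * Real.exp (1 + M^2/4)) * Real.exp (-(1/4) * u^2) := by
              rw [show (1 + M^2/4 - u^2/4 : ℝ) = (1 + M^2/4) + (-(1/4) * u^2) by ring,
                Real.exp_add]
              ring
      · rw [hGdef]
        simp only [indicator_of_notMem hu]
        rw [norm_zero]
        positivity
    · -- integrability of bound
      exact (integrable_exp_neg_mul_sq (by norm_num : (0:ℝ) < 1/4)).const_mul _
    · -- pointwise limit a.e.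
      have hae : ∀ᵐ u : ℝ, u ≠ -C := by
        rw [ae_iff]
        have : {u : ℝ | ¬ u ≠ -C} = {-C} := by ext w; simp
        rw [this]
        exact measure_singleton _
      filter_upwards [hae] with u hu
      rcases hu.lt_or_gt with hult | hugt
      · -- u < -C : G r u → gaussianPDFReal 0 1 u
        rw [indicator_of_mem (show u ∈ Iio (-C) from hult)]
        have hexpE : Tendsto (fun r : ℕ => Real.exp (((r:ℝ) - 1) *
            Real.log (1 + u / Real.sqrt r) - u * Real.sqrt r)) atTop
            (𝓝 (Real.exp (-(u^2/2)))) :=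
          (Real.continuous_exp.tendsto _).comp (my_exponent_tendsto u)
        have hlim0 := my_stirling.mul hexpE
        rw [show ((Real.sqrt (2 * Real.pi))⁻¹ * Real.exp (-(u^2/2)))
            = gaussianPDFReal 0 1 u from (my_gaussian_pdf u).symm] at hlim0
        apply hlim0.congr'
        have hev1 : ∀ᶠ r : ℕ in atTop, -(Real.sqrt r) < u := by
          filter_upwards [my_sqrt_tendsto.eventually_gt_atTop (-u)] with r hr
          linarith
        have hev2 : ∀ᶠ r : ℕ in atTop, u ≤ -(c r) := by
          filter_upwards [hc.eventually_lt_const (show C < -u by linarith)] with r hr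
          linarith
        filter_upwards [eventually_ge_atTop 1, hev1, hev2] with r hr1 h1 h2
        rw [hGdef]
        simp only [indicator_of_mem (Set.mem_Ioc.2 ⟨h1, h2⟩)]
        rw [hFdef]
        simp only []
        rw [my_F_eq r hr1 u h1]
      · -- u > -C : G r u → 0
        rw [indicator_of_notMem (show u ∉ Iio (-C) by simp [not_lt]; linarith)]
        have hev : ∀ᶠ r : ℕ in atTop, -(c r) < u := by
          filter_upwards [hc.eventually_const_lt (show -u < C by linarith)] with r hr
          linarith
        apply tendsto_const_nhds.congr'
        filter_upwards [hev] with r hr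
        rw [hGdef]
        simp only []
        rw [indicator_of_notMem (by simp [Set.mem_Ioc]; intro h; linarith)]
  -- identity: eventually S r = 1 - ∫ G r
  have hident : ∀ᶠ r : ℕ in atTop, (∑ k ∈ Finset.range r,
      Real.exp (-(lam r)) * (lam r)^k / (k.factorial : ℝ)) = 1 - ∫ u, G r u := by
    filter_upwards [eventually_ge_atTop 1] with r hr
    have hl : 0 < lam r := hpos r
    have hr0 : (0:ℝ) < r := by exact_mod_cast hr
    have hs : (0:ℝ) < Real.sqrt r := Real.sqrt_pos.2 hr0
    set p : ℝ → ℝ := fun x => Real.exp (-x) * x ^ (r-1) / ((r-1).factorial : ℝ) with hpdef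
    -- sum = ∫ over Ioi (lam r)
    have h1 : (∑ k ∈ Finset.range r,
        Real.exp (-(lam r)) * (lam r)^k / (k.factorial : ℝ)) = ∫ x in Ioi (lam r), p x := by
      rw [hpdef]
      rw [my_integral_Ioi (r-1) hl.le, Nat.sub_add_cancel hr]
    -- split
    have hIoc : IntegrableOn p (Ioc 0 (lam r)) :=
      (my_integrableOn (r-1) le_rfl).mono_set Ioc_subset_Ioi_self
    have hIoi : IntegrableOn p (Ioi (lam r)) := my_integrableOn (r-1) hl.le
    have hsplit := setIntegral_union (Ioc_disjoint_Ioi le_rfl) measurableSet_Ioi hIoc hIoi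
    rw [Ioc_union_Ioi_eq_Ioi hl.le] at hsplit
    have htot : ∫ x in Ioi (0:ℝ), p x = 1 := my_integral_total (r-1)
    -- change of variables
    have hab : -(Real.sqrt r) ≤ -(c r) := by
      rw [neg_le_neg_iff, hcdef]
      rw [div_le_iff₀ hs]
      nlinarith [Real.mul_self_sqrt hr0.le, hl]
    have h0' : Real.sqrt r * (-(Real.sqrt r)) + (r:ℝ) = 0 := by
      rw [mul_neg, Real.mul_self_sqrt hr0.le]
      ring
    have hl' : Real.sqrt r * (-(c r)) + (r:ℝ) = lam r := by
      rw [hcdef]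
      field_simp
      ring
    have hchg : ∫ u, G r u = ∫ x in Ioc 0 (lam r), p x := by
      rw [hGdef]
      rw [integral_indicator measurableSet_Ioc]
      rw [← intervalIntegral.integral_of_le hab]
      have : ∫ u in (-(Real.sqrt r))..(-(c r)), F r u
          = Real.sqrt r • ∫ u in (-(Real.sqrt r))..(-(c r)), p (Real.sqrt r * u + r) := by
        rw [← intervalIntegral.integral_smul]
        congr 1
      rw [this, intervalIntegral.smul_integral_comp_mul_add p (Real.sqrt r) (r:ℝ), h0', hl',
        intervalIntegral.integral_of_le hl.le]
    rw [h1, hchg]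
    linarith [hsplit, htot]
  -- conclude
  have hfinal := (tendsto_const_nhds (x := (1:ℝ)) (f := atTop (α := ℕ))).sub hDCT
  rw [integral_indicator measurableSet_Iio] at hfinal
  exact hfinal.congr' (by filter_upwards [hident] with r h using h.symm)

lemma my_gaussian_target (C : ℝ) :
    (gaussianReal 0 1 (Iic C)).toReal = 1 - ∫ u in Iio (-C), gaussianPDFReal 0 1 u := by
  rw [gaussianReal_apply_eq_integral 0 one_ne_zero (Iic C),
    ENNReal.toReal_ofReal (setIntegral_nonneg measurableSet_Iic
      (fun u _ => gaussianPDFReal_nonneg _ _ _))]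
  have heven : ∀ u : ℝ, gaussianPDFReal 0 1 (-u) = gaussianPDFReal 0 1 u := by
    intro u
    simp [gaussianPDFReal]
  have hsym := integral_comp_neg_Ioi (-C) (gaussianPDFReal 0 1)
  simp_rw [neg_neg, heven] at hsym
  have hsplit := setIntegral_union (Iio_disjoint_Ici (le_refl (-C))) measurableSet_Ici
    ((integrable_gaussianPDFReal 0 1).integrableOn (s := Iio (-C)))
    ((integrable_gaussianPDFReal 0 1).integrableOn (s := Ici (-C)))
  rw [Iio_union_Ici, setIntegral_univ, integral_gaussianPDFReal_eq_one 0 one_ne_zero] at hsplit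
  rw [integral_Ici_eq_integral_Ioi] at hsplit
  linarith [hsym, hsplit]

/-- One-dimensional limit for the continuous-time `r`-th order extremal process
`Y^{(r)}(t) = inf{x > x_l : c(t,x) < r}`, where `c ω t x` counts the points of a Poisson random
measure (intensity `Leb × Π`, `Q(x) = Π(x,x_r)`) in `[0,t] × (x,x_r)`. Under the left-tail
condition `(s − Q(a(s)x + b(s)))/√s → h(x)`, for each fixed `t > 0`,
`P[(Y^{(r)}(t) − b(r/t))/a(r/t) ≤ x] → Φ(√t·h(x))` as `r → ∞`. -/
theorem rth_extremal_process_normal_limit {Ω : Type*} [MeasurableSpace Ω] (P : Measure Ω)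
    [IsProbabilityMeasure P] (xl xr : ℝ) (hlr : xl < xr)
    (Q : ℝ → ℝ) (hQpos : ∀ y ∈ Ioo xl xr, 0 < Q y)
    (c : Ω → ℝ → ℝ → ℕ)
    (hanti : ∀ ω t, AntitoneOn (c ω t) (Ioo xl xr))
    (hrc : ∀ ω t, ∀ y ∈ Ioo xl xr, ∃ ε > 0, ∀ z ∈ Ico y (y + ε), c ω t z = c ω t y)
    (hempty : ∀ ω, ∀ t > (0 : ℝ), ∃ y ∈ Ioo xl xr, c ω t y = 0)
    (hdist : ∀ t > (0 : ℝ), ∀ y ∈ Ioo xl xr,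
      Measure.map (fun ω => c ω t y) P = poissonMeasure (t * Q y).toNNReal)
    (Y : ℕ → ℝ → Ω → ℝ)
    (hY : ∀ r t ω, Y r t ω = sInf {y | xl < y ∧ c ω t y < r})
    (a b : ℝ → ℝ) (ha : ∀ s, 0 < a s) (x h : ℝ)
    (hmem : ∀ s > (0 : ℝ), a s * x + b s ∈ Ioo xl xr)
    (hlim : Tendsto (fun s : ℝ => (s - Q (a s * x + b s)) / Real.sqrt s) atTop (𝓝 h))
    (t : ℝ) (ht : 0 < t) :
    Tendsto
      (fun r : ℕ =>
        (P {ω | (Y r t ω - b ((r : ℝ) / t)) / a ((r : ℝ) / t) ≤ x}).toReal)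
      atTop (𝓝 ((gaussianReal 0 1 (Iic (Real.sqrt t * h))).toReal)) := by
  set C : ℝ := Real.sqrt t * h with hCdef
  set lam : ℕ → ℝ := fun r =>
    if r = 0 then 1 else t * Q (a ((r:ℝ)/t) * x + b ((r:ℝ)/t)) with hlamdef
  have hspos : ∀ r : ℕ, 1 ≤ r → (0:ℝ) < (r:ℝ)/t := by
    intro r hr
    have : (0:ℝ) < r := by exact_mod_cast hr
    positivity
  have hlampos : ∀ r : ℕ, 0 < lam r := by
    intro r
    rw [hlamdef]
    by_cases h0 : r = 0
    · simp [h0]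
    · simp only [h0, if_false]
      exact mul_pos ht (hQpos _ (hmem _ (hspos r (Nat.one_le_iff_ne_zero.2 h0))))
  -- hc
  have hdiv : Tendsto (fun r : ℕ => (r:ℝ)/t) atTop atTop :=
    tendsto_natCast_atTop_atTop.atTop_div_const ht
  have hc0 : Tendsto (fun r : ℕ => Real.sqrt t *
      (((r:ℝ)/t - Q (a ((r:ℝ)/t) * x + b ((r:ℝ)/t))) / Real.sqrt ((r:ℝ)/t)))
      atTop (𝓝 C) := by
    rw [hCdef]
    exact tendsto_const_nhds.mul (hlim.comp hdiv)
  have hc : Tendsto (fun r : ℕ => ((r:ℝ) - lam r) / Real.sqrt r) atTop (𝓝 C) := by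
    apply hc0.congr'
    filter_upwards [eventually_ge_atTop 1] with r hr
    have hr0 : (0:ℝ) < r := by exact_mod_cast hr
    have hsr : (0:ℝ) < (r:ℝ)/t := hspos r hr
    have hne : r ≠ 0 := Nat.one_le_iff_ne_zero.1 hr
    rw [hlamdef]
    simp only [hne, if_false]
    set s : ℝ := (r:ℝ)/t with hsdef
    set q : ℝ := Q (a s * x + b s) with hqdef
    have hrts : (r:ℝ) = t * s := by
      rw [hsdef]
      field_simp
    have hsqrt : Real.sqrt (r:ℝ) = Real.sqrt t * Real.sqrt s := by
      rw [hrts, Real.sqrt_mul ht.le]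
    have hst : 0 < Real.sqrt t := Real.sqrt_pos.2 ht
    have hss : 0 < Real.sqrt s := Real.sqrt_pos.2 hsr
    rw [hsqrt, hrts]
    have htt : Real.sqrt t * Real.sqrt t = t := Real.mul_self_sqrt ht.le
    field_simp
    linear_combination (s - q) * htt
  -- event equivalence
  have hevent : ∀ r : ℕ, 1 ≤ r → ∀ ω,
      ((Y r t ω - b ((r:ℝ)/t)) / a ((r:ℝ)/t) ≤ x ↔
        c ω t (a ((r:ℝ)/t) * x + b ((r:ℝ)/t)) < r) := by
    intro r hr ω
    set s : ℝ := (r:ℝ)/t with hsdef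
    have hsr : 0 < s := hspos r hr
    set y : ℝ := a s * x + b s with hydef
    have hy : y ∈ Ioo xl xr := hmem s hsr
    have hdiv_iff : (Y r t ω - b s) / a s ≤ x ↔ Y r t ω ≤ y := by
      rw [div_le_iff₀ (ha s), hydef]
      constructor <;> intro h' <;> nlinarith [mul_comm x (a s)]
    rw [hdiv_iff, hY]
    set S := {z | xl < z ∧ c ω t z < r} with hSdef
    have hbdd : BddBelow S := ⟨xl, fun z hz => le_of_lt hz.1⟩
    obtain ⟨y0, hy0, hcy0⟩ := hempty ω t ht
    have hy0S : y0 ∈ S := ⟨hy0.1, by rw [hcy0]; exact hr⟩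
    have hSne : S.Nonempty := ⟨y0, hy0S⟩
    constructor
    · intro hinf
      obtain ⟨ε, hε, hconst⟩ := hrc ω t y hy
      obtain ⟨z, hzS, hz⟩ := Real.lt_sInf_add_pos hSne hε
      rcases le_or_gt z y with hzy | hyz
      · have hzmem : z ∈ Ioo xl xr := ⟨hzS.1, lt_of_le_of_lt hzy hy.2⟩
        exact lt_of_le_of_lt (hanti ω t hzmem hy hzy) hzS.2
      · have hcc : c ω t z = c ω t y := hconst z ⟨le_of_lt hyz, by linarith⟩
        rw [← hcc]
        exact hzS.2
    · intro hcy
      exact csInf_le hbdd ⟨hy.1, hcy⟩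
  -- probability computation
  have hprob : ∀ᶠ r : ℕ in atTop,
      (P {ω | (Y r t ω - b ((r:ℝ)/t)) / a ((r:ℝ)/t) ≤ x}).toReal
      = ∑ k ∈ Finset.range r, Real.exp (-(lam r)) * (lam r)^k / (k.factorial : ℝ) := by
    filter_upwards [eventually_ge_atTop 1] with r hr
    set s : ℝ := (r:ℝ)/t with hsdef
    have hsr : 0 < s := hspos r hr
    set y : ℝ := a s * x + b s with hydef
    have hy : y ∈ Ioo xl xr := hmem s hsr
    have hmap := hdist t ht y hy
    have haem : AEMeasurable (fun ω => c ω t y) P := by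
      by_contra hnm
      rw [Measure.map_of_not_aemeasurable hnm] at hmap
      have h1 : (poissonMeasure (t * Q y).toNNReal) univ = 1 := measure_univ
      rw [← hmap] at h1
      simp at h1
    have hmeas : MeasurableSet {n : ℕ | n < r} := trivial
    have hsetq : {ω | (Y r t ω - b s) / a s ≤ x} = (fun ω => c ω t y) ⁻¹' {n : ℕ | n < r} := by
      ext ω
      simpa using hevent r hr ω
    rw [hsetq, ← Measure.map_apply_of_aemeasurable haem hmeas, hmap]
    have hΛ : (((t * Q y).toNNReal : ℝ≥0) : ℝ) = lam r := by
      rw [Real.coe_toNNReal _ (mul_pos ht (hQpos y hy)).le, hlamdef]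
      simp only [Nat.one_le_iff_ne_zero.1 hr, if_false]
      rfl
    have hsetr : {n : ℕ | n < r} = ((Finset.range r : Finset ℕ) : Set ℕ) := by ext n; simp
    rw [hsetr, ← sum_measure_singleton, ENNReal.toReal_sum (fun k _ => by
      rw [poissonMeasure_singleton]; exact ENNReal.ofReal_ne_top)]
    apply Finset.sum_congr rfl
    intro k hk
    rw [poissonMeasure_singleton, ENNReal.toReal_ofReal (by positivity), hΛ]
  -- conclusion
  rw [show (gaussianReal 0 1 (Iic C)).toReal
      = 1 - ∫ u in Iio (-C), gaussianPDFReal 0 1 u from my_gaussian_target C]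
  exact (my_poisson_clt lam hlampos C hc).congr'
    (by filter_upwards [hprob] with r hrr using hrr.symm)
end

section
/- Convergence of the normalized minimum jointly with order statistics: under the condition r·F(a_r x − b_r) → g_γ(x) for all x with g_γ(x) > 0 (equivalently the domain of attraction condition for minima), for each fixed j ≥ 0, P[(M_{r+j}^{(r)} + b_r)/a_r ≤ x] → P[Γ_{j+1} ≤ g_γ(x)] = Σ-free closed form 1 − Σ_{k=0}^{j} e^{−g_γ(x)} g_γ(x)^k / k!, where Γ_{j+1} is a sum of j+1 i.i.d. standard exponentials. -/
open MeasureTheory ProbabilityTheory Filter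
open scoped ENNReal Topology

/-- The `r`-th largest among `x 1, …, x n` (with multiplicity), for `1 ≤ r ≤ n`. -/
noncomputable def kthLargestR (x : ℕ → ℝ) (r n : ℕ) : ℝ :=
  (((List.range n).map (fun i => x (i + 1))).mergeSort (fun a b => decide (b ≤ a))).getD
    (r - 1) 0

lemma sorted_count_le (s : List ℝ) (hs : List.Pairwise (fun a b : ℝ => b ≤ a) s)
    (k : ℕ) (hk : k < s.length) (t : ℝ) :
    s.get ⟨k, hk⟩ ≤ t ↔ s.countP (fun a => decide (t < a)) ≤ k := by
  induction s generalizing k with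
  | nil => simp at hk
  | cons a s ih =>
    rw [List.pairwise_cons] at hs
    rw [List.countP_cons]
    cases k with
    | zero =>
      simp only [List.get]
      constructor
      · intro h
        have h0 : s.countP (fun a => decide (t < a)) = 0 := by
          rw [List.countP_eq_zero]
          intro b hb
          simp only [decide_eq_true_eq, not_lt]
          exact le_trans (hs.1 b hb) h
        simp [h0, not_lt.2 h]
      · intro h
        by_contra hc
        push_neg at hc
        simp [hc] at h
    | succ k =>
      have hk' : k < s.length := by simpa using hk
      have hiff := ih hs.2 k hk'
      simp only [List.get] at *
      by_cases hta : t < a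
      · rw [if_pos (by simpa using hta)]
        rw [hiff]; omega
      · rw [if_neg (by simpa using hta)]
        constructor
        · intro h; have := hiff.1 h; omega
        · intro _
          exact le_trans (hs.1 _ (s.get_mem _)) (not_lt.1 hta)

lemma kthLargestR_le_iff (x : ℕ → ℝ) (r j : ℕ) (hr : 1 ≤ r) (t : ℝ) :
    kthLargestR x r (r + j) ≤ t ↔
      j + 1 ≤ ((Finset.range (r + j)).filter (fun i => x (i + 1) ≤ t)).card := by
  set n := r + j with hn
  set l := (List.range n).map (fun i => x (i + 1)) with hl
  set s := l.mergeSort (fun a b => decide (b ≤ a)) with hs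
  have hslen : s.length = n := by
    rw [hs, List.length_mergeSort, hl, List.length_map, List.length_range]
  have hsorted : List.Pairwise (fun a b : ℝ => b ≤ a) s := by
    have h := List.pairwise_mergeSort (le := fun a b : ℝ => decide (b ≤ a))
      (fun a b c hab hbc => by
        simp only [decide_eq_true_eq] at *; exact le_trans hbc hab)
      (fun a b => by
        simp only [Bool.or_eq_true, decide_eq_true_eq]; exact le_total b a) l
    exact h.imp (fun hab => by simpa using hab)
  have hrk : r - 1 < s.length := by omega
  have hget : kthLargestR x r n = s.get ⟨r - 1, hrk⟩ := List.getD_eq_get _ _ ⟨r - 1, hrk⟩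
  rw [hget, sorted_count_le s hsorted (r - 1) hrk t]
  have hperm : s.countP (fun a => decide (t < a)) = l.countP (fun a => decide (t < a)) :=
    (List.mergeSort_perm l _).countP_eq _
  have hmap : l.countP (fun a => decide (t < a))
      = (List.range n).countP (fun i => decide (t < x (i + 1))) := by
    rw [hl, List.countP_map]; rfl
  have hfin1 : ((Finset.range n).filter (fun i => t < x (i + 1))).card
      = (List.range n).countP (fun i => decide (t < x (i + 1))) := by
    rw [List.countP_eq_length_filter]
    rfl
  have hfin2 : ((Finset.range n).filter (fun i => t < x (i + 1))).card
      + ((Finset.range n).filter (fun i => x (i + 1) ≤ t)).card = n := by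
    have h := Finset.card_filter_add_card_filter_not
      (s := Finset.range n) (p := fun i => t < x (i + 1))
    rw [Finset.card_range] at h
    have h2 : (Finset.range n).filter (fun i => ¬ t < x (i + 1))
        = (Finset.range n).filter (fun i => x (i + 1) ≤ t) :=
      Finset.filter_congr (fun i _ => by simp [not_lt])
    rw [h2] at h
    exact h
  rw [hperm, hmap, ← hfin1]
  omega

lemma filter_eq_inter {Ω : Type*} (X : ℕ → Ω → ℝ) (t : ℝ) (s₀ T : Finset ℕ) (hT : T ⊆ s₀) :
    {ω | s₀.filter (fun i => X i ω ≤ t) = T}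
      = ⋂ i ∈ s₀, (if i ∈ T then {ω | X i ω ≤ t} else {ω | X i ω ≤ t}ᶜ) := by
  ext ω
  simp only [Set.mem_setOf_eq, Set.mem_iInter]
  constructor
  · intro h i hi
    by_cases hiT : i ∈ T
    · simp only [hiT, if_true]
      have h2 := hiT; rw [← h] at h2
      exact (Finset.mem_filter.1 h2).2
    · simp only [hiT, if_false, Set.mem_compl_iff, Set.mem_setOf_eq]
      intro hle
      exact hiT (h ▸ Finset.mem_filter.2 ⟨hi, hle⟩)
  · intro h
    ext i
    simp only [Finset.mem_filter]
    constructor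
    · rintro ⟨hi, hle⟩
      have h2 := h i hi
      by_cases hiT : i ∈ T
      · exact hiT
      · simp only [hiT, if_false, Set.mem_compl_iff, Set.mem_setOf_eq] at h2
        exact absurd hle h2
    · intro hiT
      refine ⟨hT hiT, ?_⟩
      have h2 := h i (hT hiT)
      simpa [hiT] using h2

lemma prob_filter_eq {Ω : Type*} [MeasurableSpace Ω] (P : Measure Ω)
    [IsProbabilityMeasure P] (X : ℕ → Ω → ℝ) (hmeas : ∀ i, Measurable (X i))
    (hindep : iIndepFun X P)
    (t : ℝ) (p : ℝ) (hp : ∀ i, P {ω | X i ω ≤ t} = ENNReal.ofReal p) (hp0 : 0 ≤ p)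
    (s₀ T : Finset ℕ) (hT : T ⊆ s₀) :
    P {ω | s₀.filter (fun i => X i ω ≤ t) = T}
      = ENNReal.ofReal p ^ T.card * ENNReal.ofReal (1 - p) ^ (s₀.card - T.card) := by
  have hcompl : ∀ i, P {ω | X i ω ≤ t}ᶜ = ENNReal.ofReal (1 - p) := by
    intro i
    have hm : MeasurableSet {ω | X i ω ≤ t} := measurableSet_le (hmeas i) measurable_const
    rw [prob_compl_eq_one_sub hm, hp i]
    rw [ENNReal.ofReal_sub _ hp0, ENNReal.ofReal_one]
  rw [filter_eq_inter X t s₀ T hT, hindep.meas_biInter (S := s₀)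
    (fun i _ => by
      by_cases hiT : i ∈ T
      · simp only [hiT, if_true]
        exact ⟨Set.Iic t, measurableSet_Iic, rfl⟩
      · simp only [hiT, if_false]
        exact ⟨Set.Ioi t, measurableSet_Ioi, by ext ω; simp [not_le]⟩)]
  rw [← Finset.prod_sdiff hT]
  have h1 : ∏ i ∈ s₀ \ T, P (if i ∈ T then {ω | X i ω ≤ t} else {ω | X i ω ≤ t}ᶜ)
      = ENNReal.ofReal (1 - p) ^ (s₀.card - T.card) := by
    rw [Finset.prod_congr rfl (fun i hi => by
      rw [if_neg (Finset.mem_sdiff.1 hi).2, hcompl i]), Finset.prod_const,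
      Finset.card_sdiff_of_subset hT]
  have h2 : ∏ i ∈ T, P (if i ∈ T then {ω | X i ω ≤ t} else {ω | X i ω ≤ t}ᶜ)
      = ENNReal.ofReal p ^ T.card := by
    rw [Finset.prod_congr rfl (fun i hi => by rw [if_pos hi, hp i]), Finset.prod_const]
  rw [h1, h2, mul_comm]

/-- Probability that at least `j+1` of the variables indexed by `s₀` fall `≤ t`. -/
lemma prob_count_ge {Ω : Type*} [MeasurableSpace Ω] (P : Measure Ω)
    [IsProbabilityMeasure P] (X : ℕ → Ω → ℝ) (hmeas : ∀ i, Measurable (X i))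
    (hindep : iIndepFun X P)
    (t : ℝ) (p : ℝ) (hp : ∀ i, P {ω | X i ω ≤ t} = ENNReal.ofReal p)
    (hp0 : 0 ≤ p) (hp1 : p ≤ 1) (s₀ : Finset ℕ) (j : ℕ) :
    (P {ω | j + 1 ≤ (s₀.filter (fun i => X i ω ≤ t)).card}).toReal
      = 1 - ∑ k ∈ Finset.range (j + 1),
          (s₀.card.choose k : ℝ) * p ^ k * (1 - p) ^ (s₀.card - k) := by
  classical
  set E : Finset ℕ → Set Ω := fun T => {ω | s₀.filter (fun i => X i ω ≤ t) = T} with hE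
  have hEmeas : ∀ T ⊆ s₀, MeasurableSet (E T) := by
    intro T hT
    have hm : MeasurableSet {ω | s₀.filter (fun i => X i ω ≤ t) = T} := by
      rw [filter_eq_inter X t s₀ T hT]
      refine Finset.measurableSet_biInter _ (fun i _ => ?_)
      by_cases hiT : i ∈ T <;> simp only [hiT, if_true, if_false]
      · exact measurableSet_le (hmeas i) measurable_const
      · exact (measurableSet_le (hmeas i) measurable_const).compl
    exact hm
  set B : Finset (Finset ℕ) := s₀.powerset.filter (fun T => T.card ≤ j) with hB
  have hUnion : {ω | (s₀.filter (fun i => X i ω ≤ t)).card ≤ j} = ⋃ T ∈ B, E T := by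
    ext ω
    simp only [Set.mem_setOf_eq, Set.mem_iUnion, hB, Finset.mem_filter,
      Finset.mem_powerset, hE]
    constructor
    · intro h
      exact ⟨s₀.filter (fun i => X i ω ≤ t), ⟨Finset.filter_subset _ _, h⟩, rfl⟩
    · rintro ⟨T, ⟨_, hcard⟩, hfT⟩
      rw [hfT]; exact hcard
  have hdisj : (B : Set (Finset ℕ)).PairwiseDisjoint E := by
    intro T _ T' _ hne
    refine Set.disjoint_left.2 (fun ω h1 h2 => hne ?_)
    have e1 : s₀.filter (fun i => X i ω ≤ t) = T := h1
    have e2 : s₀.filter (fun i => X i ω ≤ t) = T' := h2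
    rw [← e1, e2]
  have hPle : P {ω | (s₀.filter (fun i => X i ω ≤ t)).card ≤ j}
      = ∑ k ∈ Finset.range (j + 1),
          (s₀.card.choose k) • (ENNReal.ofReal p ^ k
            * ENNReal.ofReal (1 - p) ^ (s₀.card - k)) := by
    rw [hUnion, measure_biUnion_finset hdisj
      (fun T hT => hEmeas T (Finset.mem_powerset.1 (Finset.mem_filter.1 hT).1))]
    have hBeq : B = (Finset.range (j + 1)).biUnion (fun k => s₀.powersetCard k) := by
      ext T
      simp only [hB, Finset.mem_filter, Finset.mem_powerset, Finset.mem_biUnion,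
        Finset.mem_range, Finset.mem_powersetCard]
      constructor
      · rintro ⟨hsub, hcard⟩; exact ⟨T.card, by omega, hsub, rfl⟩
      · rintro ⟨k, hk, hsub, hcard⟩; exact ⟨hsub, by omega⟩
    rw [hBeq, Finset.sum_biUnion (fun k _ k' _ hkk' => by
      refine Finset.disjoint_left.2 (fun T h1 h2 => hkk' ?_)
      rw [← (Finset.mem_powersetCard.1 h1).2, ← (Finset.mem_powersetCard.1 h2).2])]
    refine Finset.sum_congr rfl (fun k _ => ?_)
    have hT' : ∀ T ∈ s₀.powersetCard k, P (E T)
        = ENNReal.ofReal p ^ k * ENNReal.ofReal (1 - p) ^ (s₀.card - k) := by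
      intro T hT
      obtain ⟨hsub, hcard⟩ := Finset.mem_powersetCard.1 hT
      have h := prob_filter_eq P X hmeas hindep t p hp hp0 s₀ T hsub
      rw [hcard] at h
      exact h
    rw [Finset.sum_congr rfl hT', Finset.sum_const, Finset.card_powersetCard]
  have hcomplset : {ω | j + 1 ≤ (s₀.filter (fun i => X i ω ≤ t)).card}
      = {ω | (s₀.filter (fun i => X i ω ≤ t)).card ≤ j}ᶜ := by
    ext ω; simp only [Set.mem_setOf_eq, Set.mem_compl_iff]; constructor <;> intro h <;> omega
  have hmeasle : MeasurableSet {ω | (s₀.filter (fun i => X i ω ≤ t)).card ≤ j} := by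
    rw [hUnion]
    exact Finset.measurableSet_biUnion _
      (fun T hT => hEmeas T (Finset.mem_powerset.1 (Finset.mem_filter.1 hT).1))
  have hq0 : (0:ℝ) ≤ 1 - p := by linarith
  have hofReal : ∀ k : ℕ, (s₀.card.choose k) • (ENNReal.ofReal p ^ k
        * ENNReal.ofReal (1 - p) ^ (s₀.card - k))
      = ENNReal.ofReal ((s₀.card.choose k : ℝ) * p ^ k * (1 - p) ^ (s₀.card - k)) := by
    intro k
    rw [← ENNReal.ofReal_pow hp0, ← ENNReal.ofReal_pow hq0, ← ENNReal.ofReal_mul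
      (by positivity), nsmul_eq_mul, ← ENNReal.ofReal_natCast (s₀.card.choose k),
      ← ENNReal.ofReal_mul (by positivity), mul_assoc]
  have hterm0 : ∀ k ∈ Finset.range (j + 1),
      (0:ℝ) ≤ (s₀.card.choose k : ℝ) * p ^ k * (1 - p) ^ (s₀.card - k) :=
    fun k _ => by positivity
  have hS : P {ω | (s₀.filter (fun i => X i ω ≤ t)).card ≤ j}
      = ENNReal.ofReal (∑ k ∈ Finset.range (j + 1),
          (s₀.card.choose k : ℝ) * p ^ k * (1 - p) ^ (s₀.card - k)) := by
    rw [hPle, ENNReal.ofReal_sum_of_nonneg hterm0]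
    exact Finset.sum_congr rfl (fun k _ => hofReal k)
  have hSle1 : (∑ k ∈ Finset.range (j + 1),
      (s₀.card.choose k : ℝ) * p ^ k * (1 - p) ^ (s₀.card - k)) ≤ 1 := by
    have := prob_le_one (μ := P) (s := {ω | (s₀.filter (fun i => X i ω ≤ t)).card ≤ j})
    rw [hS] at this
    exact (ENNReal.ofReal_le_one).1 this
  rw [hcomplset, prob_compl_eq_one_sub hmeasle, hS, ← ENNReal.ofReal_one,
    ← ENNReal.ofReal_sub _ (Finset.sum_nonneg hterm0), ENNReal.toReal_ofReal (by linarith)]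

/-- Under the domain of attraction condition for minima `r·F(a_r x − b_r) → g_γ(x) > 0`, for
each fixed `j ≥ 0` the normalized `r`-th largest of the first `r + j` observations satisfies
`P[(M_{r+j}^{(r)} + b_r)/a_r ≤ x] → P[Γ_{j+1} ≤ g_γ(x)] = 1 − Σ_{k=0}^{j} e^{−g} g^k/k!`. -/
theorem rth_maximum_gamma_limit {Ω : Type*} [MeasurableSpace Ω] (P : Measure Ω)
    [IsProbabilityMeasure P] (X : ℕ → Ω → ℝ) (hmeas : ∀ i, Measurable (X i))
    (hindep : iIndepFun X P)
    (F : ℝ → ℝ) (hcdf : ∀ i y, (P {ω | X i ω ≤ y}).toReal = F y) (hF : Continuous F)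
    (a b : ℕ → ℝ) (ha : ∀ r, 0 < a r) (x : ℝ) (g : ℝ) (hg : 0 < g)
    (hlim : Tendsto (fun r : ℕ => (r : ℝ) * F (a r * x - b r)) atTop (𝓝 g))
    (j : ℕ) :
    Tendsto
      (fun r : ℕ =>
        (P {ω | (kthLargestR (fun i => X i ω) r (r + j) + b r) / a r ≤ x}).toReal)
      atTop
      (𝓝 (1 - ∑ k ∈ Finset.range (j + 1), Real.exp (-g) * g ^ k / (Nat.factorial k))) := by
  classical
  set p : ℕ → ℝ := fun r => F (a r * x - b r) with hpdef
  have hPA : ∀ i y, P {ω | X i ω ≤ y} = ENNReal.ofReal (F y) := fun i y => by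
    rw [← hcdf i y, ENNReal.ofReal_toReal (measure_ne_top P _)]
  have hp0 : ∀ r, 0 ≤ p r := fun r => by
    have h0 : p r = (P {ω | X 0 ω ≤ a r * x - b r}).toReal := (hcdf 0 _).symm
    rw [h0]; exact ENNReal.toReal_nonneg
  have hp1 : ∀ r, p r ≤ 1 := fun r => by
    have h0 : p r = (P {ω | X 0 ω ≤ a r * x - b r}).toReal := (hcdf 0 _).symm
    rw [h0]
    have h1 : P {ω | X 0 ω ≤ a r * x - b r} ≤ 1 := prob_le_one
    calc (P {ω | X 0 ω ≤ a r * x - b r}).toReal ≤ (1 : ℝ≥0∞).toReal :=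
          ENNReal.toReal_mono (by simp) h1
      _ = 1 := by simp
  -- eventual closed form
  have hkey : ∀ r : ℕ, 1 ≤ r →
      (P {ω | (kthLargestR (fun i => X i ω) r (r + j) + b r) / a r ≤ x}).toReal
      = 1 - ∑ k ∈ Finset.range (j + 1),
          ((r + j).choose k : ℝ) * p r ^ k * (1 - p r) ^ (r + j - k) := by
    intro r hr
    set t := a r * x - b r with ht
    set s₀ : Finset ℕ := (Finset.range (r + j)).image (· + 1) with hs₀
    have hinj : Function.Injective (· + 1 : ℕ → ℕ) := fun u v h => by simpa using h
    have hs₀card : s₀.card = r + j := by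
      rw [hs₀, Finset.card_image_of_injective _ hinj, Finset.card_range]
    have hset : {ω | (kthLargestR (fun i => X i ω) r (r + j) + b r) / a r ≤ x}
        = {ω | j + 1 ≤ (s₀.filter (fun i => X i ω ≤ t)).card} := by
      ext ω
      rw [Set.mem_setOf_eq, Set.mem_setOf_eq, div_le_iff₀ (ha r)]
      have h1 : kthLargestR (fun i => X i ω) r (r + j) + b r ≤ x * a r
          ↔ kthLargestR (fun i => X i ω) r (r + j) ≤ t := by
        rw [ht]; constructor <;> intro <;> linarith
      rw [h1, kthLargestR_le_iff _ r j hr t]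
      have h2 : (s₀.filter (fun i => X i ω ≤ t)).card
          = ((Finset.range (r + j)).filter (fun i => X (i + 1) ω ≤ t)).card := by
        rw [hs₀, Finset.filter_image, Finset.card_image_of_injective _ hinj]
      rw [← h2]
    rw [hset, prob_count_ge P X hmeas hindep t (p r) (fun i => hPA i t)
      (hp0 r) (hp1 r) s₀ j, hs₀card]
  -- limits
  have hppos : ∀ᶠ r : ℕ in atTop, 0 < p r := by
    have h1 : ∀ᶠ r : ℕ in atTop, g / 2 < (r : ℝ) * p r :=
      hlim.eventually (lt_mem_nhds (show g / 2 < g by linarith))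
    filter_upwards [h1, eventually_ge_atTop 1] with r hgr hr1
    by_contra hc
    push_neg at hc
    have : (r : ℝ) * p r ≤ 0 := mul_nonpos_of_nonneg_of_nonpos (by positivity) hc
    linarith
  have hp0lim : Tendsto p atTop (𝓝 0) := by
    have h1 : Tendsto (fun r : ℕ => ((r : ℝ))⁻¹ * ((r : ℝ) * p r)) atTop (𝓝 (0 * g)) :=
      (tendsto_inv_atTop_nhds_zero_nat).mul hlim
    rw [zero_mul] at h1
    refine h1.congr' ?_
    filter_upwards [eventually_ge_atTop 1] with r hr
    have : (r : ℝ) ≠ 0 := by positivity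
    field_simp
  -- limit of each term
  have hterm : ∀ k ∈ Finset.range (j + 1), Tendsto
      (fun r : ℕ => ((r + j).choose k : ℝ) * p r ^ k * (1 - p r) ^ (r + j - k))
      atTop (𝓝 (Real.exp (-g) * g ^ k / (Nat.factorial k))) := by
    intro k hk
    have hkj : k ≤ j := by simpa [Nat.lt_succ_iff] using hk
    -- part A : choose * p^k → g^k / k!
    have hA : Tendsto (fun r : ℕ => ((r + j).choose k : ℝ) * p r ^ k)
        atTop (𝓝 (g ^ k / (Nat.factorial k))) := by
      have hfac : ∀ i ∈ Finset.range k, Tendsto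
          (fun r : ℕ => (((r : ℝ) + j) - i) * p r) atTop (𝓝 g) := by
        intro i _
        have h1 : Tendsto (fun r : ℕ => (r : ℝ) * p r + ((j : ℝ) - i) * p r)
            atTop (𝓝 (g + ((j : ℝ) - i) * 0)) :=
          hlim.add (tendsto_const_nhds.mul hp0lim)
        simp only [mul_zero, add_zero] at h1
        refine h1.congr (fun r => by ring)
      have hprod : Tendsto (fun r : ℕ => ∏ i ∈ Finset.range k, ((((r : ℝ) + j) - i) * p r))
          atTop (𝓝 (∏ _i ∈ Finset.range k, g)) :=
        tendsto_finset_prod _ hfac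
      rw [Finset.prod_const, Finset.card_range] at hprod
      have heq : ∀ᶠ r : ℕ in atTop, (1 / (Nat.factorial k : ℝ)) *
          ∏ i ∈ Finset.range k, ((((r : ℝ) + j) - i) * p r)
          = ((r + j).choose k : ℝ) * p r ^ k := by
        filter_upwards [eventually_ge_atTop k] with r hr
        have hdesc : ((r + j).descFactorial k : ℝ)
            = ∏ i ∈ Finset.range k, (((r : ℝ) + j) - i) := by
          rw [Nat.descFactorial_eq_prod_range, Nat.cast_prod]
          refine Finset.prod_congr rfl (fun i hi => ?_)
          have hik : i < k := Finset.mem_range.1 hi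
          rw [Nat.cast_sub (by omega)]
          push_cast
          ring
        have hchoose : ((r + j).descFactorial k : ℝ)
            = (Nat.factorial k : ℝ) * ((r + j).choose k : ℝ) := by
          rw [← Nat.cast_mul, Nat.descFactorial_eq_factorial_mul_choose]
        rw [Finset.prod_mul_distrib, Finset.prod_const, Finset.card_range,
          ← hdesc, hchoose]
        have : (Nat.factorial k : ℝ) ≠ 0 := by positivity
        field_simp
      have := ((tendsto_const_nhds (x := 1 / (Nat.factorial k : ℝ))).mul hprod).congr' heq
      have heq2 : 1 / (Nat.factorial k : ℝ) * g ^ k = g ^ k / (Nat.factorial k) := by ring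
      rwa [heq2] at this
    -- part B : (1-p)^(r+j-k) → exp (-g)
    have hB : Tendsto (fun r : ℕ => (1 - p r) ^ (r + j - k)) atTop (𝓝 (Real.exp (-g))) := by
      have hderiv : HasDerivAt (fun y : ℝ => Real.log (1 - y)) (-1) 0 := by
        have h1 : HasDerivAt (fun y : ℝ => 1 - y) (-1) 0 := by
          simpa using ((hasDerivAt_id (0:ℝ)).const_sub 1)
        have h2 := h1.log (by norm_num)
        simpa using h2
      have hslope : Tendsto (slope (fun y : ℝ => Real.log (1 - y)) 0)
          (𝓝[≠] (0:ℝ)) (𝓝 (-1)) := hasDerivAt_iff_tendsto_slope.1 hderiv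
      have hpne : Tendsto p atTop (𝓝[≠] (0:ℝ)) := by
        rw [tendsto_nhdsWithin_iff]
        exact ⟨hp0lim, hppos.mono (fun r hr => by
          simp only [Set.mem_compl_iff, Set.mem_singleton_iff]; linarith)⟩
      have hslope' : Tendsto (fun r : ℕ => slope (fun y : ℝ => Real.log (1 - y)) 0 (p r))
          atTop (𝓝 (-1)) := hslope.comp hpne
      have hnp : Tendsto (fun r : ℕ => ((r + j - k : ℕ) : ℝ) * p r) atTop (𝓝 g) := by
        have h1 : Tendsto (fun r : ℕ => (r : ℝ) * p r + ((j : ℝ) - k) * p r)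
            atTop (𝓝 (g + ((j : ℝ) - k) * 0)) :=
          hlim.add (tendsto_const_nhds.mul hp0lim)
        simp only [mul_zero, add_zero] at h1
        refine h1.congr' ?_
        filter_upwards [eventually_ge_atTop k] with r hr
        rw [Nat.cast_sub (by omega)]
        push_cast
        ring
      have hmul : Tendsto (fun r : ℕ => (((r + j - k : ℕ) : ℝ) * p r) *
          slope (fun y : ℝ => Real.log (1 - y)) 0 (p r)) atTop (𝓝 (g * (-1))) :=
        hnp.mul hslope'
      rw [show g * (-1) = -g by ring] at hmul
      have hexp : Tendsto (fun r : ℕ => Real.exp ((((r + j - k : ℕ) : ℝ) * p r) *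
          slope (fun y : ℝ => Real.log (1 - y)) 0 (p r))) atTop (𝓝 (Real.exp (-g))) :=
        (Real.continuous_exp.tendsto _).comp hmul
      refine hexp.congr' ?_
      have hplt : ∀ᶠ r : ℕ in atTop, p r < 1 := hp0lim.eventually
        (eventually_lt_nhds (by norm_num : (0:ℝ) < 1))
      filter_upwards [hppos, hplt] with r hrpos hrlt
      have hne : p r ≠ 0 := ne_of_gt hrpos
      have h1p : (0:ℝ) < 1 - p r := by linarith
      have hsl : slope (fun y : ℝ => Real.log (1 - y)) 0 (p r)
          = Real.log (1 - p r) / p r := by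
        rw [slope_def_field]; simp
      rw [hsl, show (((r + j - k : ℕ) : ℝ) * p r) * (Real.log (1 - p r) / p r)
        = ((r + j - k : ℕ) : ℝ) * Real.log (1 - p r) by field_simp]
      rw [Real.exp_nat_mul, Real.exp_log h1p]
    have := hA.mul hB
    rw [show g ^ k / (Nat.factorial k) * Real.exp (-g)
      = Real.exp (-g) * g ^ k / (Nat.factorial k) by ring] at this
    refine this.congr (fun r => by ring)
  have hsum : Tendsto (fun r : ℕ => ∑ k ∈ Finset.range (j + 1),
      ((r + j).choose k : ℝ) * p r ^ k * (1 - p r) ^ (r + j - k)) atTop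
      (𝓝 (∑ k ∈ Finset.range (j + 1), Real.exp (-g) * g ^ k / (Nat.factorial k))) :=
    tendsto_finset_sum _ hterm
  have hfinal := (tendsto_const_nhds (x := (1:ℝ))).sub hsum
  refine hfinal.congr' ?_
  filter_upwards [eventually_ge_atTop 1] with r hr
  exact (hkey r hr).symm
end

section
/- If ℛ is the support of the measure associated with R(x) = −log(1−F(x)) and, for each r, ℛ_r is a Poisson random set (point process) on (ℓ_F, r_F) with mean measure r·R such that ℛ_r ⊆ ℛ almost surely, then for every open set G with G ∩ ℛ ≠ ∅ one has P[ℛ_r ∩ G ≠ ∅] = 1 − e^{−r·R(G)} → 1 as r → ∞; consequently ℛ_r converges in the Fell topology on closed sets to the deterministic limit ℛ. -/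
open MeasureTheory Filter Set
open scoped ENNReal Topology

/-- If `ℛ` is the support of the measure `R` (associated with `R(x) = −log(1−F(x))`) and, for
each `r`, `ℛ_r` is a Poisson random closed set with mean measure `r·R` contained in `ℛ`
(so that the avoidance probability of an open `G` is `e^{−r·R(G)}`), then for every open `G`
meeting `ℛ` one has `P[ℛ_r ∩ G ≠ ∅] = 1 − e^{−r·R(G)} → 1` as `r → ∞`; by the reduction of
Fell convergence to hitting probabilities, `ℛ_r` converges to the deterministic limit `ℛ`. -/
theorem range_converges_to_support {Ω : Type*} [MeasurableSpace Ω] (P : Measure Ω)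
    [IsProbabilityMeasure P] (R : Measure ℝ) [IsLocallyFiniteMeasure R]
    (supp : Set ℝ) (hsupp : supp = {x : ℝ | ∀ U : Set ℝ, IsOpen U → x ∈ U → 0 < R U})
    (A : ℕ → Ω → Set ℝ) (hsub : ∀ r ω, A r ω ⊆ supp)
    (hmeasA : ∀ (r : ℕ) (G : Set ℝ), IsOpen G → MeasurableSet {ω | A r ω ∩ G = ∅})
    (hvoid : ∀ (r : ℕ) (G : Set ℝ), IsOpen G → R G ≠ ⊤ →
      P {ω | A r ω ∩ G = ∅} = ENNReal.ofReal (Real.exp (-((r : ℝ) * (R G).toReal)))) :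
    (∀ (r : ℕ) (G : Set ℝ), IsOpen G → R G ≠ ⊤ →
      P {ω | (A r ω ∩ G).Nonempty} =
        1 - ENNReal.ofReal (Real.exp (-((r : ℝ) * (R G).toReal)))) ∧
    (∀ G : Set ℝ, IsOpen G → (G ∩ supp).Nonempty →
      Tendsto (fun r : ℕ => P {ω | (A r ω ∩ G).Nonempty}) atTop (𝓝 1)) := by
  have key : ∀ (r : ℕ) (G : Set ℝ), IsOpen G → R G ≠ ⊤ →
      P {ω | (A r ω ∩ G).Nonempty} =
        1 - ENNReal.ofReal (Real.exp (-((r : ℝ) * (R G).toReal))) := by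
    intro r G hG hfin
    have hset : {ω | (A r ω ∩ G).Nonempty} = {ω | A r ω ∩ G = ∅}ᶜ := by
      ext ω
      simp [Set.nonempty_iff_ne_empty]
    rw [hset, prob_compl_eq_one_sub (hmeasA r G hG), hvoid r G hG hfin]
  refine ⟨key, ?_⟩
  intro G hG ⟨x, hxG, hxsupp⟩
  -- find a finite-measure open neighborhood of x
  obtain ⟨U, hxU, hUopen, hUfin⟩ := R.exists_isOpen_measure_lt_top x
  set G' := G ∩ U with hG'
  have hG'open : IsOpen G' := hG.inter hUopen
  have hG'fin : R G' ≠ ⊤ := (lt_of_le_of_lt (measure_mono inter_subset_right) hUfin).ne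
  have hG'pos : 0 < R G' := by
    rw [hsupp] at hxsupp
    exact hxsupp G' hG'open ⟨hxG, hxU⟩
  have hc : 0 < (R G').toReal := ENNReal.toReal_pos hG'pos.ne' hG'fin
  -- lower bound tends to 1
  have hlow : Tendsto (fun r : ℕ => P {ω | (A r ω ∩ G').Nonempty}) atTop (𝓝 1) := by
    have heq : ∀ r : ℕ, P {ω | (A r ω ∩ G').Nonempty} =
        1 - ENNReal.ofReal (Real.exp (-((r : ℝ) * (R G').toReal))) :=
      fun r => key r G' hG'open hG'fin
    simp only [heq]
    have hexp : Tendsto (fun r : ℕ => Real.exp (-((r : ℝ) * (R G').toReal))) atTop (𝓝 0) := by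
      apply Real.tendsto_exp_atBot.comp
      have : Tendsto (fun r : ℕ => (r : ℝ) * (R G').toReal) atTop atTop :=
        (tendsto_natCast_atTop_atTop).atTop_mul_const hc
      exact tendsto_neg_atBot_iff.mpr this
    have : Tendsto (fun r : ℕ => ENNReal.ofReal (Real.exp (-((r : ℝ) * (R G').toReal))))
        atTop (𝓝 0) := by
      rw [← ENNReal.ofReal_zero]
      exact ENNReal.tendsto_ofReal hexp
    have h1 : Tendsto (fun r : ℕ =>
        (1 : ℝ≥0∞) - ENNReal.ofReal (Real.exp (-((r : ℝ) * (R G').toReal)))) atTop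
        (𝓝 (1 - 0)) :=
      ENNReal.Tendsto.sub tendsto_const_nhds this (Or.inl ENNReal.one_ne_top)
    simpa using h1
  -- squeeze
  refine tendsto_of_tendsto_of_tendsto_of_le_of_le hlow tendsto_const_nhds
    (fun r => ?_) (fun r => prob_le_one)
  exact measure_mono fun ω ⟨y, hy1, hy2⟩ => ⟨y, hy1, hy2.1⟩
end
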